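/- arXiv:2303.17414 — 3 statements merged into one kernel-verified Lean document; each statement's English description precedes it below -/
import Mathlib

section
/- Let f : [0,∞) → [0,∞) be a quasi-isometry. Suppose there exist real numbers λ > δ > 0, a subset D that is dense in the interval (λ − δ, λ + δ), and a constant M > 0 such that |s·f(x) − f(s·x)| < M for all s ∈ D and all x ≥ 0. Then there exists c > 0 such that f(x)/x → c as x → ∞ (that is, [f] lies in ∪_{c>0} H_c). -/
open Filter Topology

/-- A quasi-isometry of the ray `[0,∞)`, modelled as a real function:
it maps nonnegatives to nonnegatives, satisfies the two-sided quasi-isometry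
inequality with a constant `K > 1` on nonnegative arguments, and its image is
coarsely dense in `[0,∞)`. -/
def IsQI (g : ℝ → ℝ) : Prop :=
  (∀ x, 0 ≤ x → 0 ≤ g x) ∧
  (∃ K : ℝ, 1 < K ∧ ∀ x y, 0 ≤ x → 0 ≤ y →
    (1 / K) * |x - y| - K ≤ |g x - g y| ∧ |g x - g y| ≤ K * |x - y| + K) ∧
  (∃ K' : ℝ, 0 < K' ∧ ∀ z, 0 ≤ z → ∃ x, 0 ≤ x ∧ |g x - z| ≤ K')

/-- `Sset g` is the set of all subsequential limits of `g x / x` as `x → ∞`: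
limits of `g (u n) / u n` over sequences `u n → ∞` for which this quotient converges. -/
def Sset (g : ℝ → ℝ) : Set ℝ :=
  { c | ∃ u : ℕ → ℝ, (∀ n, 0 ≤ u n) ∧ Tendsto u atTop atTop ∧
      Tendsto (fun n => g (u n) / u n) atTop (𝓝 c) }

/-- `g` is piecewise linear on `[0,∞)`: there is a strictly increasing divergent
sequence of breakpoints starting at `0` on whose consecutive intervals `g` is affine. -/
def IsPL (g : ℝ → ℝ) : Prop :=
  ∃ t : ℕ → ℝ, t 0 = 0 ∧ StrictMono t ∧ Tendsto t atTop atTop ∧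
    ∀ n, ∃ lam : ℝ, ∀ x ∈ Set.Icc (t n) (t (n + 1)),
      g x = g (t n) + lam * (x - t n)

/-- Two quasi-isometries `f, g` of `[0,∞)` are H-equivalent if `f` is boundedly close
(on `[0,∞)`) to `h ∘ g` for some quasi-isometry `h` with `h y / y → 1`. -/
def HEquiv (f g : ℝ → ℝ) : Prop :=
  ∃ h : ℝ → ℝ, IsQI h ∧ Tendsto (fun y => h y / y) atTop (𝓝 1) ∧
    ∃ C : ℝ, ∀ x, 0 ≤ x → |f x - h (g x)| ≤ C

/-- Coverage: for `1 < a < b`, every sufficiently large `ρ` lies in some `(a^m, b^m)`. -/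
lemma my_cover (a b : ℝ) (ha : 1 < a) (hab : a < b) :
    ∃ R : ℝ, 1 < R ∧ ∀ ρ : ℝ, R ≤ ρ → ∃ m : ℕ, a ^ m < ρ ∧ ρ < b ^ m := by
  have ha0 : 0 < a := lt_trans one_pos ha
  have hba : 1 < b / a := (one_lt_div ha0).mpr hab
  obtain ⟨N, hN⟩ := pow_unbounded_of_one_lt a hba
  refine ⟨a ^ (N + 1), one_lt_pow₀ ha (Nat.succ_ne_zero N), ?_⟩
  intro ρ hρ
  have hex : ∃ j : ℕ, ρ ≤ a ^ (j + 1) := by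
    obtain ⟨j, hj⟩ := pow_unbounded_of_one_lt ρ ha
    exact ⟨j, le_of_lt (lt_of_lt_of_le hj (pow_le_pow_right₀ (le_of_lt ha) (Nat.le_succ j)))⟩
  set m := Nat.find hex with hm
  have hup : ρ ≤ a ^ (m + 1) := Nat.find_spec hex
  have hNm : N ≤ m := by
    have : a ^ (N + 1) ≤ a ^ (m + 1) := le_trans hρ hup
    exact Nat.succ_le_succ_iff.mp ((pow_le_pow_iff_right₀ ha).mp this)
  have hlow : a ^ m < ρ := by
    rcases Nat.eq_zero_or_pos m with h0 | h0
    · rw [h0, pow_zero]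
      calc (1:ℝ) < a ^ (N+1) := one_lt_pow₀ ha (Nat.succ_ne_zero N)
        _ ≤ ρ := hρ
    · have hmin := Nat.find_min hex (m := m - 1) (by omega)
      push_neg at hmin
      have : m - 1 + 1 = m := by omega
      rw [this] at hmin
      exact hmin
  refine ⟨m, hlow, ?_⟩
  have h1 : a ^ (m + 1) < b ^ m := by
    have h2 : a < (b / a) ^ m :=
      lt_of_lt_of_le hN (pow_le_pow_right₀ (le_of_lt hba) hNm)
    have h3 : (b / a) ^ m * a ^ m = b ^ m := by
      rw [div_pow]; field_simp
    calc a ^ (m+1) = a * a ^ m := by ring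
      _ < (b / a) ^ m * a ^ m := by
          apply mul_lt_mul_of_pos_right h2 (pow_pos ha0 m)
      _ = b ^ m := h3
  exact lt_of_le_of_lt hup h1


/-- Reach: using step-multipliers densely available in `(a,b)`, from any `x>0` one can
reach a point in `[ρx, (1+ε)ρx]` while changing `r` by at most `B/x`. -/
lemma my_reach (r : ℝ → ℝ) (a b M : ℝ) (ha : 1 < a) (hab : a < b) (hM : 0 < M)
    (hdense : ∀ u v : ℝ, a ≤ u → u < v → v ≤ b →
      ∃ e : ℝ, u < e ∧ e < v ∧ ∀ x : ℝ, 0 < x → |r (e * x) - r x| ≤ M / x) :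
    ∀ k : ℕ, ∀ ρ x ε : ℝ, a ^ k < ρ → ρ < b ^ k → 0 < x → 0 < ε →
      ∃ x', ρ * x ≤ x' ∧ x' ≤ (1 + ε) * ρ * x ∧ |r x' - r x| ≤ (M * a / (a - 1)) / x := by
  have ha0 : 0 < a := lt_trans one_pos ha
  have ha1 : 0 < a - 1 := by linarith
  have hB : 0 < M * a / (a - 1) := by positivity
  have hMB : M ≤ M * a / (a - 1) := by
    rw [le_div_iff₀ ha1]; nlinarith
  intro k
  induction k with
  | zero =>
    intro ρ x ε h1 h2 _ _
    simp only [pow_zero] at h1 h2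
    exact absurd (lt_trans h1 h2) (lt_irrefl 1)
  | succ n ih =>
    intro ρ x ε h1 h2 hx hε
    have haρ : a ≤ ρ := by
      calc a = a ^ 1 := (pow_one a).symm
        _ ≤ a ^ (n+1) := pow_le_pow_right₀ (le_of_lt ha) (Nat.one_le_iff_ne_zero.mpr (Nat.succ_ne_zero n))
        _ ≤ ρ := le_of_lt h1
    by_cases hρb : ρ < b
    · -- one final step
      obtain ⟨e, he1, he2, hstep⟩ := hdense ρ (min b ((1 + ε) * ρ))
        haρ (lt_min hρb (by nlinarith)) (min_le_left _ _)
      refine ⟨e * x, ?_, ?_, le_trans (hstep x hx) (by gcongr)⟩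
      · nlinarith
      · have : e ≤ (1 + ε) * ρ := le_of_lt (lt_of_lt_of_le he2 (min_le_right _ _))
        nlinarith
    · -- take one step of size roughly between a and b, recurse
      push_neg at hρb
      have hρ0 : 0 < ρ := lt_of_lt_of_le (lt_trans one_pos (by exact_mod_cast lt_of_lt_of_le ha hab.le)) hρb
      have hbn1 : 1 < b ^ n := by
        by_contra h
        push_neg at h
        have : b ^ (n+1) ≤ b := by
          calc b ^ (n+1) = b ^ n * b := by ring
            _ ≤ 1 * b := by nlinarith
            _ = b := one_mul b
        linarith [lt_of_le_of_lt hρb (lt_of_lt_of_le h2 this)]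
      have han : (0:ℝ) < a ^ n := pow_pos ha0 n
      have hbn : (0:ℝ) < b ^ n := by positivity
      have hanbn : a ^ n < b ^ n := by
        have hn : n ≠ 0 := by
          rintro rfl; simp at hbn1
        exact pow_lt_pow_left₀ hab (le_of_lt ha0) hn
      -- choose e in (max a (ρ/b^n), min b (ρ/a^n))
      obtain ⟨e, he1, he2, hstep⟩ := hdense (max a (ρ / b ^ n)) (min b (ρ / a ^ n))
        (le_max_left _ _)
        (by
          apply max_lt
          · apply lt_min hab
            rw [lt_div_iff₀ han]
            calc a * a ^ n = a ^ (n+1) := by ring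
              _ < ρ := h1
          · apply lt_min
            · rw [div_lt_iff₀ hbn]
              calc ρ < b ^ (n+1) := h2
                _ = b * b ^ n := by ring
            · rw [div_lt_div_iff₀ hbn han]
              nlinarith)
        (min_le_left _ _)
      have hea : a < e := lt_of_le_of_lt (le_max_left _ _) he1
      have he0 : 0 < e := lt_trans ha0 hea
      have hrec1 : a ^ n < ρ / e := by
        rw [lt_div_iff₀ he0]
        have : e < ρ / a ^ n := lt_of_lt_of_le he2 (min_le_right _ _)
        rw [lt_div_iff₀ han] at this
        nlinarith
      have hrec2 : ρ / e < b ^ n := by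
        rw [div_lt_iff₀ he0]
        have : ρ / b ^ n < e := lt_of_le_of_lt (le_max_right _ _) he1
        rw [div_lt_iff₀ hbn] at this
        nlinarith
      obtain ⟨x', hx'1, hx'2, hx'err⟩ := ih (ρ / e) (e * x) ε hrec1 hrec2 (by positivity) hε
      have hex : ρ / e * (e * x) = ρ * x := by field_simp
      refine ⟨x', by rw [hex] at hx'1; exact hx'1, ?_, ?_⟩
      · calc x' ≤ (1 + ε) * (ρ / e) * (e * x) := hx'2
          _ = (1 + ε) * ρ * x := by field_simp
      · have herr1 : |r (e * x) - r x| ≤ M / x := hstep x hx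
        have herr2 : |r x' - r (e * x)| ≤ (M * a / (a - 1)) / (e * x) := hx'err
        have htri : |r x' - r x| ≤ |r x' - r (e * x)| + |r (e * x) - r x| := abs_sub_le _ _ _
        have hkey : (M * a / (a - 1)) / (e * x) + M / x ≤ (M * a / (a - 1)) / x := by
          have h1' : (M * a / (a - 1)) / (e * x) ≤ (M * a / (a - 1)) / (a * x) := by
            apply div_le_div_of_nonneg_left (le_of_lt hB) (by positivity)
            nlinarith
          have h2' : (M * a / (a - 1)) / (a * x) + M / x = (M * a / (a - 1)) / x := by
            field_simp
            ring
          linarith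
        linarith


lemma my_chain (r : ℝ → ℝ) (M e : ℝ) (he : 1 < e) (hM : 0 < M)
    (hstep : ∀ x : ℝ, 0 < x → |r (e * x) - r x| ≤ M / x) :
    ∀ k : ℕ, ∀ x : ℝ, 0 < x → |r (e ^ k * x) - r x| ≤ (M * e / (e - 1)) / x := by
  have he0 : 0 < e := lt_trans one_pos he
  have he1 : 0 < e - 1 := by linarith
  have ht : (0:ℝ) < 1 - 1/e := by
    have : 1/e < 1 := by rw [div_lt_one he0]; exact he
    linarith
  have main : ∀ k : ℕ, ∀ x : ℝ, 0 < x →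
      |r (e ^ k * x) - r x| ≤ (M / x) * ((1 - (1/e) ^ k) / (1 - 1/e)) := by
    intro k
    induction k with
    | zero => intro x hx; simp
    | succ n ih =>
      intro x hx
      have hxn : 0 < e ^ n * x := by positivity
      have h1 : |r (e ^ (n+1) * x) - r (e ^ n * x)| ≤ M / (e ^ n * x) := by
        have := hstep (e ^ n * x) hxn
        have heq : e * (e ^ n * x) = e ^ (n+1) * x := by ring
        rwa [heq] at this
      have h2 := ih x hx
      have htri : |r (e ^ (n+1) * x) - r x| ≤
          |r (e ^ (n+1) * x) - r (e ^ n * x)| + |r (e ^ n * x) - r x| := abs_sub_le _ _ _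
      have hgeom : M / (e ^ n * x) + (M / x) * ((1 - (1/e) ^ n) / (1 - 1/e))
          = (M / x) * ((1 - (1/e) ^ (n+1)) / (1 - 1/e)) := by
        have hne : e ≠ 0 := ne_of_gt he0
        have hne2 : (1 : ℝ) - 1/e ≠ 0 := ne_of_gt ht
        field_simp
        have hpn : e ^ n * e⁻¹ ^ n = 1 := by rw [← mul_pow, mul_inv_cancel₀ hne, one_pow]
        have hinv : e * e⁻¹ = 1 := mul_inv_cancel₀ hne
        linear_combination (e * e⁻¹ - e) * hpn + hinv
      linarith
  intro k x hx
  have h := main k x hx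
  have htk : (0:ℝ) ≤ (1/e) ^ k := by positivity
  have h1 : (1 - (1/e) ^ k) / (1 - 1/e) ≤ 1 / (1 - 1/e) := by
    gcongr
    · linarith
  have h2 : (M / x) * ((1 - (1/e) ^ k) / (1 - 1/e)) ≤ (M / x) * (1 / (1 - 1/e)) :=
    mul_le_mul_of_nonneg_left h1 (by positivity)
  have h3 : (M / x) * (1 / (1 - 1/e)) = (M * e / (e - 1)) / x := by
    field_simp
  linarith

lemma my_cont (f : ℝ → ℝ) (K C₁ x y ε : ℝ) (hK : 1 < K) (hC : 0 ≤ C₁)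
    (hx : 1 ≤ x) (hxy : x ≤ y) (hy : y ≤ (1 + ε) * x) (hε : 0 < ε)
    (hfx : 0 ≤ f x) (hfxu : f x ≤ K * x + C₁)
    (habs : |f y - f x| ≤ K * (y - x) + K) :
    |f y / y - f x / x| ≤ (2 * K + C₁) * ε + K / x := by
  have hx0 : (0:ℝ) < x := lt_of_lt_of_le one_pos hx
  have hy0 : (0:ℝ) < y := lt_of_lt_of_le hx0 hxy
  have hK0 : (0:ℝ) < K := lt_trans one_pos hK
  have habs' := abs_le.mp habs
  have h5 : y - x ≤ ε * x := by nlinarith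
  have hdiv : K / x * (y * x) = K * y := by field_simp
  have hdiv2 : K / x * (x * y) = K * y := by field_simp
  rw [abs_sub_le_iff]
  constructor
  · rw [div_sub_div _ _ (ne_of_gt hy0) (ne_of_gt hx0), div_le_iff₀ (by positivity)]
    nlinarith [habs'.2, hfx, hdiv, mul_le_mul_of_nonneg_right h5 hx0.le,
      mul_le_mul_of_nonneg_left hxy hx0.le,
      mul_le_mul_of_nonneg_left hxy (mul_nonneg hε.le hx0.le),
      mul_nonneg (mul_nonneg hC hε.le) (mul_nonneg hx0.le hy0.le),
      mul_nonneg hfx (sub_nonneg.mpr hxy)]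
  · rw [div_sub_div _ _ (ne_of_gt hx0) (ne_of_gt hy0), div_le_iff₀ (by positivity)]
    nlinarith [habs'.1, hfx, hfxu, hdiv2, mul_le_mul_of_nonneg_right h5 hx0.le,
      mul_le_mul_of_nonneg_left hxy hx0.le,
      mul_le_mul_of_nonneg_left hxy (mul_nonneg hε.le hx0.le),
      mul_nonneg (mul_nonneg hC hε.le) (mul_nonneg hx0.le hy0.le),
      mul_le_mul_of_nonneg_right hfxu (by nlinarith : (0:ℝ) ≤ ε * x),
      mul_le_mul_of_nonneg_right h5 hfx,
      mul_le_mul_of_nonneg_left h5 hC,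
      mul_le_mul_of_nonneg_left h5 hK0.le,
      mul_le_mul_of_nonneg_left hx (mul_nonneg hC hε.le)]


lemma my_dense (f : ℝ → ℝ) (lam del M : ℝ) (hdel : 0 < del) (hld : del < lam)
    (D : Set ℝ) (hD1 : D ⊆ Set.Ioo (lam-del) (lam+del))
    (hD2 : Set.Ioo (lam-del) (lam+del) ⊆ closure D) (hM : 0 < M)
    (hcomm : ∀ s ∈ D, ∀ x : ℝ, 0 ≤ x → |s * f x - f (s * x)| < M) :
    ∃ a b : ℝ, 1 < a ∧ a < b ∧ ∀ u v : ℝ, a ≤ u → u < v → v ≤ b →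
      ∃ e : ℝ, u < e ∧ e < v ∧ ∀ x : ℝ, 0 < x → |f (e*x)/(e*x) - f x / x| ≤ M / x := by
  have hmd0 : 0 < lam - del := by linarith
  have hpd0 : 0 < lam + del := by linarith
  have hmdpd : lam - del < lam + del := by linarith
  -- generic step bound for s ∈ D at base point y > 0
  have step : ∀ s ∈ D, ∀ y : ℝ, 0 < y →
      |f (s*y)/(s*y) - f y / y| ≤ M / (s*y) := by
    intro s hsD y hy
    have hs0 : 0 < s := lt_trans hmd0 (hD1 hsD).1
    have hsy : 0 < s * y := mul_pos hs0 hy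
    have hid : f (s*y)/(s*y) - f y / y = (f (s*y) - s * f y) / (s*y) := by
      field_simp
    rw [hid, abs_div, abs_of_pos hsy]
    apply (div_le_div_iff_of_pos_right hsy).mpr
    rw [abs_sub_comm]
    exact le_of_lt (hcomm s hsD y (le_of_lt hy))
  -- find an element of D in any nonempty open subinterval of (lam-del, lam+del)
  have pick : ∀ p q : ℝ, lam - del ≤ p → p < q → q ≤ lam + del →
      ∃ s ∈ D, p < s ∧ s < q := by
    intro p q hp hpq hq
    have hmid : (p + q)/2 ∈ Set.Ioo (lam - del) (lam + del) := by
      constructor <;> [nlinarith; nlinarith]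
    have hcl : (p + q)/2 ∈ closure D := hD2 hmid
    have hne : (Set.Ioo p q ∩ D).Nonempty := by
      apply mem_closure_iff.mp hcl (Set.Ioo p q) isOpen_Ioo
      constructor <;> [nlinarith; nlinarith]
    obtain ⟨s, hsI, hsD⟩ := hne
    exact ⟨s, hsD, hsI.1, hsI.2⟩
  by_cases h1 : 1 < lam + del
  · -- use multipliers s ∈ D with s > 1
    set m := max (lam - del) 1 with hm
    refine ⟨(m + (lam + del))/2, lam + del, ?_, ?_, ?_⟩
    · have : 1 ≤ m := le_max_right _ _
      nlinarith
    · have : m < lam + del := max_lt hmdpd h1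
      nlinarith
    · intro u v hu huv hv
      have hau : lam - del < u := by
        have h2 : lam - del ≤ m := le_max_left _ _
        have h3 : m < lam + del := max_lt hmdpd h1
        nlinarith
      obtain ⟨s, hsD, hsu, hsv⟩ := pick u v (le_of_lt hau) huv hv
      have hs1 : 1 < s := by
        have h2 : (1:ℝ) ≤ m := le_max_right _ _
        have h3 : m < lam + del := max_lt hmdpd h1
        nlinarith
      refine ⟨s, hsu, hsv, fun x hx => ?_⟩
      calc |f (s*x)/(s*x) - f x / x| ≤ M / (s*x) := step s hsD x hx
        _ ≤ M / x := by
            apply div_le_div_of_nonneg_left (le_of_lt hM) hx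
            nlinarith
  · -- lam + del ≤ 1 : use multipliers 1/s with s ∈ D
    push_neg at h1
    have hinv : 1/(lam+del) < 1/(lam-del) := by
      apply one_div_lt_one_div_of_lt hmd0 hmdpd
    refine ⟨(1/(lam+del) + 1/(lam-del))/2, 1/(lam-del), ?_, ?_, ?_⟩
    · have h2 : (1:ℝ) ≤ 1/(lam+del) := by
        rw [le_one_div one_pos hpd0]  -- maybe wrong lemma; fix below
        simpa using h1
      nlinarith
    · nlinarith
    · intro u v hu huv hv
      have ha1 : 1 < (1/(lam+del) + 1/(lam-del))/2 := by
        have h2 : (1:ℝ) ≤ 1/(lam+del) := by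
          rw [le_one_div one_pos hpd0]
          simpa using h1
        nlinarith
      have hu1 : 1 < u := lt_of_lt_of_le ha1 hu
      have hu0 : 0 < u := lt_trans one_pos hu1
      have hv0 : 0 < v := lt_trans hu0 huv
      -- pick s ∈ D ∩ (1/v, 1/u)
      have hp1 : lam - del ≤ 1/v := by
        rw [le_div_iff₀ hv0]
        calc (lam - del) * v ≤ (lam - del) * (1/(lam-del)) := by
              apply mul_le_mul_of_nonneg_left hv (le_of_lt hmd0)
          _ = 1 := by field_simp
      have hp2 : 1/v < 1/u := one_div_lt_one_div_of_lt hu0 huv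
      have hp3 : 1/u ≤ lam + del := by
        have h4 : 1/(lam+del) < u := by
          have : 1/(lam+del) < (1/(lam+del) + 1/(lam-del))/2 := by nlinarith
          linarith
        rw [div_le_iff₀ hu0]
        calc (1:ℝ) = (lam+del) * (1/(lam+del)) := by field_simp
          _ ≤ (lam+del) * u := by
              apply mul_le_mul_of_nonneg_left (le_of_lt h4) (le_of_lt hpd0)
      obtain ⟨s, hsD, hsu, hsv⟩ := pick (1/v) (1/u) hp1 hp2 hp3
      have hs0 : 0 < s := lt_trans hmd0 (hD1 hsD).1
      refine ⟨1/s, ?_, ?_, ?_⟩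
      · rw [lt_one_div hu0 hs0]
        exact hsv
      · rw [one_div_lt hs0 hv0]
        exact hsu
      · intro x hx
        set y := x / s with hy
        have hy0 : 0 < y := div_pos hx hs0
        have hxy : s * y = x := by
          rw [hy]; field_simp
        have hyx : 1/s * x = y := by
          rw [hy]; field_simp
        rw [hyx, ← hxy, abs_sub_comm]
        exact step s hsD y hy0

/-- if a quasi-isometry `f` of `[0,∞)` almost-commutes (with a uniform
bound `M`) with multiplication by every `s` in a dense subset `D` of some interval
`(λ-δ, λ+δ)` with `λ > δ > 0`, then `f x / x` converges to some `c > 0`. -/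

theorem stmt13 (f : ℝ → ℝ) (hf : IsQI f) (lam del : ℝ) (hdel : 0 < del)
    (hld : del < lam) (D : Set ℝ)
    (hD1 : D ⊆ Set.Ioo (lam - del) (lam + del))
    (hD2 : Set.Ioo (lam - del) (lam + del) ⊆ closure D)
    (M : ℝ) (hM : 0 < M)
    (hcomm : ∀ s ∈ D, ∀ x : ℝ, 0 ≤ x → |s * f x - f (s * x)| < M) :
    ∃ c : ℝ, 0 < c ∧ Tendsto (fun x => f x / x) atTop (𝓝 c) := by
  obtain ⟨hpos, ⟨K, hK, hQI⟩, -⟩ := hf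
  have hK0 : (0:ℝ) < K := lt_trans one_pos hK
  have hf00 : 0 ≤ f 0 := hpos 0 le_rfl
  set C₁ : ℝ := K + f 0 with hC₁
  have hC10 : 0 ≤ C₁ := by positivity
  -- upper linear bound
  have hub : ∀ x : ℝ, 0 ≤ x → f x ≤ K * x + C₁ := by
    intro x hx
    have h := (hQI x 0 hx le_rfl).2
    rw [sub_zero, abs_of_nonneg hx] at h
    have h2 := abs_le.mp h
    linarith [h2.2]
  -- QI increments
  have habs2 : ∀ x y : ℝ, 0 ≤ x → x ≤ y → |f y - f x| ≤ K * (y - x) + K := by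
    intro x y hx hxy
    have h := (hQI y x (le_trans hx hxy) hx).2
    rwa [abs_of_nonneg (by linarith : (0:ℝ) ≤ y - x)] at h
  -- lower linear bound
  have hlb : ∀ x : ℝ, K * (K + f 0) < x → x / K - K ≤ f x := by
    intro x hx
    have hx0 : 0 ≤ x := by nlinarith
    have h := (hQI x 0 hx0 le_rfl).1
    rw [sub_zero, abs_of_nonneg hx0] at h
    have hxK : K + f 0 < x / K := by
      rw [lt_div_iff₀ hK0]; nlinarith
    rcases abs_cases (f x - f 0) with ⟨heq, -⟩ | ⟨heq, -⟩
    · rw [heq] at h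
      have : 1 / K * x = x / K := by ring
      linarith [hf00]
    · rw [heq] at h
      exfalso
      have hfx0 : 0 ≤ f x := hpos x hx0
      have : 1 / K * x = x / K := by ring
      nlinarith
  -- dense step multipliers
  obtain ⟨a, b, ha1, hab, hdense⟩ :=
    my_dense f lam del M hdel hld D hD1 hD2 hM hcomm
  have ha0 : (0:ℝ) < a := lt_trans one_pos ha1
  set B : ℝ := M * a / (a - 1) with hB
  have hB0 : 0 < B := by
    rw [hB]; apply div_pos (by positivity) (by linarith)
  set r : ℝ → ℝ := fun x => f x / x with hr
  -- fixed multiplier e₀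
  obtain ⟨e₀, he₀a, he₀b, hstep₀⟩ := hdense a b le_rfl hab le_rfl
  have he₀1 : 1 < e₀ := lt_trans ha1 he₀a
  have hchain := my_chain r M e₀ he₀1 hM hstep₀
  have hchainB : ∀ k : ℕ, ∀ x : ℝ, 0 < x → |r (e₀ ^ k * x) - r x| ≤ B / x := by
    intro k x hx
    have h1 := hchain k x hx
    have h2 : M * e₀ / (e₀ - 1) ≤ B := by
      rw [hB, div_le_div_iff₀ (by linarith) (by linarith)]
      nlinarith
    calc |r (e₀ ^ k * x) - r x| ≤ (M * e₀ / (e₀ - 1)) / x := h1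
      _ ≤ B / x := by gcongr
  -- coverage
  obtain ⟨R, hR1, hcov⟩ := my_cover a b ha1 hab
  -- the key two-point estimate
  have key : ∀ ε : ℝ, 0 < ε → ∀ x y : ℝ, 1 ≤ x → 1 ≤ y →
      |r x - r y| ≤ B / x + B / y + K / x + (2 * K + C₁) * ε := by
    intro ε hε x y hx hy
    have hx0 : (0:ℝ) < x := lt_of_lt_of_le one_pos hx
    have hy0 : (0:ℝ) < y := lt_of_lt_of_le one_pos hy
    obtain ⟨k, hk⟩ := pow_unbounded_of_one_lt (R * y / x) he₀1
    set x' : ℝ := e₀ ^ k * x with hx'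
    have hek1 : (1:ℝ) ≤ e₀ ^ k := one_le_pow₀ (le_of_lt he₀1)
    have hx'ge : x ≤ x' := by
      rw [hx']; nlinarith
    have hx'1 : (1:ℝ) ≤ x' := le_trans hx hx'ge
    have hx'0 : (0:ℝ) < x' := lt_of_lt_of_le one_pos hx'1
    set ρ : ℝ := x' / y with hρ
    have hρR : R ≤ ρ := by
      rw [hρ, le_div_iff₀ hy0, hx']
      rw [div_lt_iff₀ hx0] at hk
      nlinarith
    obtain ⟨m, hm1, hm2⟩ := hcov ρ hρR
    obtain ⟨y', hy'1, hy'2, hy'err⟩ := my_reach r a b M ha1 hab hM hdense m ρ y ε hm1 hm2 hy0 hε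
    have hρy : ρ * y = x' := by rw [hρ]; field_simp
    rw [hρy] at hy'1
    have hy'2' : y' ≤ (1 + ε) * x' := by
      calc y' ≤ (1 + ε) * ρ * y := hy'2
        _ = (1 + ε) * x' := by rw [mul_assoc, hρy]
    -- coarse continuity between x' and y'
    have hcont := my_cont f K C₁ x' y' ε hK hC10 hx'1 hy'1 hy'2' hε
      (hpos x' (le_of_lt hx'0)) (hub x' (le_of_lt hx'0))
      (habs2 x' y' (le_of_lt hx'0) hy'1)
    have hKx : K / x' ≤ K / x := by gcongr
    have h1 : |r x' - r x| ≤ B / x := hchainB k x hx0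
    have h2 : |r y' - r y| ≤ B / y := hy'err
    have h3 : |r y' - r x'| ≤ (2 * K + C₁) * ε + K / x := by
      calc |r y' - r x'| = |f y' / y' - f x' / x'| := rfl
        _ ≤ (2 * K + C₁) * ε + K / x' := hcont
        _ ≤ (2 * K + C₁) * ε + K / x := by linarith
    calc |r x - r y| ≤ |r x - r x'| + |r x' - r y'| + |r y' - r y| := by
          have t1 := abs_sub_le (r x) (r x') (r y)
          have t2 := abs_sub_le (r x') (r y') (r y)
          linarith
      _ ≤ B / x + ((2 * K + C₁) * ε + K / x) + B / y := by
          rw [abs_sub_comm (r x) (r x'), abs_sub_comm (r x') (r y')]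
          linarith
      _ = B / x + B / y + K / x + (2 * K + C₁) * ε := by ring
  -- remove epsilon
  have key2 : ∀ x y : ℝ, 1 ≤ x → 1 ≤ y → |r x - r y| ≤ (B + K) * (1/x + 1/y) := by
    intro x y hx hy
    have hx0 : (0:ℝ) < x := lt_of_lt_of_le one_pos hx
    have hy0 : (0:ℝ) < y := lt_of_lt_of_le one_pos hy
    apply le_of_forall_pos_le_add
    intro ε' hε'
    have hKC : (0:ℝ) < 2 * K + C₁ := by linarith
    have h := key (ε' / (2 * K + C₁)) (by positivity) x y hx hy
    have heq : (2 * K + C₁) * (ε' / (2 * K + C₁)) = ε' := by field_simp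
    rw [heq] at h
    have hle : B / x + B / y + K / x ≤ (B + K) * (1/x + 1/y) := by
      have hKy : 0 ≤ K / y := by positivity
      have e1 : (B + K) * (1/x + 1/y) = B / x + B / y + K / x + K / y := by ring
      linarith
    linarith
  -- Cauchy sequence along naturals
  set u : ℕ → ℝ := fun n => r ((n:ℝ) + 1) with hu
  have hn1 : ∀ n : ℕ, (1:ℝ) ≤ (n:ℝ) + 1 := by
    intro n; have : (0:ℝ) ≤ (n:ℝ) := Nat.cast_nonneg n; linarith
  have hcauchy : CauchySeq u := by
    have hbd : ∀ n m N : ℕ, N ≤ n → N ≤ m →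
        dist (u n) (u m) ≤ (fun N : ℕ => (B + K) * (2 / ((N:ℝ) + 1))) N := by
      intro n m N hn hm
      rw [Real.dist_eq]
      have h := key2 ((n:ℝ)+1) ((m:ℝ)+1) (hn1 n) (hn1 m)
      have hc1 : 1/((n:ℝ)+1) ≤ 1/((N:ℝ)+1) := by
        apply one_div_le_one_div_of_le (by positivity)
        have : (N:ℝ) ≤ (n:ℝ) := Nat.cast_le.mpr hn
        linarith
      have hc2 : 1/((m:ℝ)+1) ≤ 1/((N:ℝ)+1) := by
        apply one_div_le_one_div_of_le (by positivity)
        have : (N:ℝ) ≤ (m:ℝ) := Nat.cast_le.mpr hm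
        linarith
      have hBK : (0:ℝ) < B + K := by linarith
      calc |u n - u m| ≤ (B + K) * (1/((n:ℝ)+1) + 1/((m:ℝ)+1)) := h
        _ ≤ (B + K) * (2 / ((N:ℝ)+1)) := by
            have : 1/((n:ℝ)+1) + 1/((m:ℝ)+1) ≤ 2/((N:ℝ)+1) := by
              have : (2:ℝ)/((N:ℝ)+1) = 1/((N:ℝ)+1) + 1/((N:ℝ)+1) := by ring
              linarith
            nlinarith
    have htd : Tendsto (fun N : ℕ => (B + K) * (2 / ((N:ℝ) + 1))) atTop (𝓝 0) := by
      have h0 : Tendsto (fun N : ℕ => (1:ℝ)/((N:ℝ)+1)) atTop (𝓝 0) :=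
        tendsto_one_div_add_atTop_nhds_zero_nat
      have := h0.const_mul ((B + K) * 2)
      simp only [mul_zero] at this
      convert this using 2 with N
      ring
    exact cauchySeq_of_le_tendsto_0 _ hbd htd
  obtain ⟨c, hc⟩ := cauchySeq_tendsto_of_complete hcauchy
  -- closeness of r x to c for x ≥ 1
  have hclose : ∀ x : ℝ, 1 ≤ x → |r x - c| ≤ (B + K) * (1/x) := by
    intro x hx
    have hseq : Tendsto (fun n : ℕ => |r x - u n|) atTop (𝓝 (|r x - c|)) :=
      ((tendsto_const_nhds.sub hc).abs)
    have hbnd : Tendsto (fun n : ℕ => (B + K) * (1/x + 1/((n:ℝ)+1))) atTop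
        (𝓝 ((B + K) * (1/x + 0))) := by
      apply Tendsto.const_mul
      exact tendsto_const_nhds.add tendsto_one_div_add_atTop_nhds_zero_nat
    have hle : ∀ n : ℕ, |r x - u n| ≤ (B + K) * (1/x + 1/((n:ℝ)+1)) := by
      intro n
      exact key2 x ((n:ℝ)+1) hx (hn1 n)
    have := le_of_tendsto_of_tendsto' hseq hbnd hle
    simpa using this
  simp only [hr] at hclose
  clear hc hcauchy hchainB hchain hstep₀ hdense hcov key key2
  clear_value B C₁
  have hBK : (0:ℝ) < B + K := by linarith
  refine ⟨c, ?_, ?_⟩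
  · -- positivity of c
    obtain ⟨x₀, hx₀1, hx₀K, hx₀B⟩ :
        ∃ x₀ : ℝ, 1 ≤ x₀ ∧ K * (K + f 0) < x₀ ∧ 2 * K * (B + 2 * K) ≤ x₀ := by
      refine ⟨max (max 1 (K * (K + f 0) + 1)) (2 * K * (B + 2 * K)),
        le_trans (le_max_left 1 _) (le_max_left _ _), ?_, le_max_right _ _⟩
      exact lt_of_lt_of_le (by linarith) (le_trans (le_max_right 1 _) (le_max_left _ _))
    have hx₀0 : (0:ℝ) < x₀ := lt_of_lt_of_le one_pos hx₀1
    have hf₀ := hlb x₀ hx₀K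
    have hcl := hclose x₀ hx₀1
    have hc1 : f x₀ / x₀ - (B + K) * (1/x₀) ≤ c := by
      have h := (abs_le.mp hcl).2
      linarith
    have hfdiv : x₀ / K / x₀ - K / x₀ ≤ f x₀ / x₀ := by
      have h1 : (x₀ / K - K) / x₀ ≤ f x₀ / x₀ := by gcongr
      have h2 : (x₀ / K - K) / x₀ = x₀ / K / x₀ - K / x₀ := by ring
      linarith
    have hxx : x₀ / K / x₀ = 1 / K := by
      rw [div_div, mul_comm, ← div_div, div_self (ne_of_gt hx₀0)]
    have hsmall : K / x₀ + (B + K) * (1/x₀) ≤ 1 / (2 * K) := by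
      have h1 : K / x₀ + (B + K) * (1/x₀) = (B + 2*K) / x₀ := by ring
      rw [h1, div_le_div_iff₀ hx₀0 (by positivity)]
      linarith [hx₀B]
    have h2K : 1/(2*K) ≤ 1/K - 1/(2*K) := by
      rw [le_sub_iff_add_le]
      have : 1/(2*K) + 1/(2*K) = 1/K := by
        rw [div_add_div _ _ (by positivity) (by positivity), div_eq_div_iff (by positivity) (by positivity)]
        ring
      linarith
    have hcpos : 1/(2*K) ≤ c := by
      rw [hxx] at hfdiv
      linarith
    have : (0:ℝ) < 1/(2*K) := by positivity
    linarith
  · -- convergence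
    rw [Metric.tendsto_atTop]
    intro ε hε
    refine ⟨max 1 ((B + K)/ε + 1), ?_⟩
    intro x hx
    have hx1 : (1:ℝ) ≤ x := le_trans (le_max_left _ _) hx
    have hx0 : (0:ℝ) < x := lt_of_lt_of_le one_pos hx1
    have hx2 : (B + K)/ε + 1 ≤ x := le_trans (le_max_right _ _) hx
    rw [Real.dist_eq]
    have h := hclose x hx1
    have hlt : (B + K) * (1/x) < ε := by
      rw [mul_one_div, div_lt_iff₀ hx0]
      have : (B + K)/ε < x := by linarith
      rw [div_lt_iff₀ hε] at this
      linarith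
    exact lt_of_le_of_lt h hlt
end

section
/- For every λ > 1 there exists a strictly increasing, continuous, piecewise-linear quasi-isometry g : [0,∞) → [0,∞) such that: (i) sup_{x≥0} |g(λx) − λ·g(x)| < ∞, so the class [g] commutes with the class of x ↦ λx in QI(ℝ₊); (ii) g(x)/x does not converge as x → ∞, i.e., liminf_{x→∞} g(x)/x < limsup_{x→∞} g(x)/x, so [g] ∉ ∪_{c>0} H_c; and (iii) for c > 0, sup_{x≥0} |g(cx) − c·g(x)| < ∞ holds if and only if c = λ^r for some integer r. -/
open Filter Topology

noncomputable def g0 (l t : ℝ) : ℝ := min ((3/2)*t - 1/2) ((t + l)/2)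

noncomputable def gf (l x : ℝ) : ℝ :=
  if 1 ≤ x then l ^ ⌊Real.logb l x⌋ * g0 l (x / l ^ ⌊Real.logb l x⌋) else x

section lemmas
set_option linter.unusedSectionVars false
variable {l : ℝ} (hl : 1 < l)
include hl

lemma lpos : (0:ℝ) < l := lt_trans one_pos hl

lemma g0_one : g0 l 1 = 1 := by
  unfold g0; rw [min_eq_left] <;> [norm_num; linarith]

lemma g0_self : g0 l l = l := by
  unfold g0; rw [min_eq_right] <;> linarith

lemma g0_bounds {s t : ℝ} (h : s ≤ t) :
    (t - s)/2 ≤ g0 l t - g0 l s ∧ g0 l t - g0 l s ≤ (3/2)*(t-s) := by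
  unfold g0
  rcases min_cases ((3/2)*t - 1/2) ((t + l)/2) with ⟨h1, h2⟩ | ⟨h1, h2⟩ <;>
    rcases min_cases ((3/2)*s - 1/2) ((s + l)/2) with ⟨h3, h4⟩ | ⟨h3, h4⟩ <;>
    constructor <;> linarith

lemma g0_ge {t : ℝ} (h1 : 1 ≤ t) (h2 : t ≤ l) : t ≤ g0 l t := by
  unfold g0; rw [le_min_iff]; constructor <;> linarith

lemma g0_gt {t : ℝ} (h1 : 1 < t) (h2 : t < l) : t < g0 l t := by
  unfold g0; rw [lt_min_iff]; constructor <;> linarith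

lemma one_le_zpow' {n : ℤ} (hn : 0 ≤ n) : (1:ℝ) ≤ l ^ n :=
  one_le_zpow₀ hl.le hn

lemma floor_spec {x : ℝ} (hx : 1 ≤ x) :
    0 ≤ ⌊Real.logb l x⌋ ∧ l ^ ⌊Real.logb l x⌋ ≤ x ∧ x < l ^ (⌊Real.logb l x⌋ + 1) := by
  have hx0 : (0:ℝ) < x := lt_of_lt_of_le one_pos hx
  have h0 : 0 ≤ ⌊Real.logb l x⌋ := Int.floor_nonneg.2 (Real.logb_nonneg hl hx)
  refine ⟨h0, ?_, ?_⟩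
  · have := Int.floor_le (Real.logb l x)
    have h2 : l ^ ((⌊Real.logb l x⌋ : ℝ)) ≤ x := by
      calc l ^ ((⌊Real.logb l x⌋ : ℝ)) ≤ l ^ (Real.logb l x) :=
            Real.rpow_le_rpow_left_iff hl |>.2 this
        _ = x := Real.rpow_logb (lpos hl) (ne_of_gt hl) hx0
    rwa [Real.rpow_intCast] at h2
  · have := Int.lt_floor_add_one (Real.logb l x)
    have h2 : x < l ^ ((⌊Real.logb l x⌋ : ℝ) + 1) := by
      calc x = l ^ (Real.logb l x) := (Real.rpow_logb (lpos hl) (ne_of_gt hl) hx0).symm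
        _ < l ^ ((⌊Real.logb l x⌋ : ℝ) + 1) := (Real.rpow_lt_rpow_left_iff hl).2 this
    have : ((⌊Real.logb l x⌋ : ℝ) + 1) = ((⌊Real.logb l x⌋ + 1 : ℤ) : ℝ) := by push_cast; ring
    rw [this, Real.rpow_intCast] at h2
    exact h2

lemma logb_zpow' (n : ℤ) : Real.logb l (l ^ n) = n := by
  rw [← Real.rpow_intCast, Real.logb_rpow (lpos hl) (ne_of_gt hl)]

lemma gf_rep' {n : ℤ} (hn : 0 ≤ n) {t : ℝ} (ht1 : 1 ≤ t) (htl : t < l) :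
    gf l (l ^ n * t) = l ^ n * g0 l t := by
  have hln : (1:ℝ) ≤ l ^ n := one_le_zpow' hl hn
  have hlnpos : (0:ℝ) < l ^ n := lt_of_lt_of_le one_pos hln
  have hx : 1 ≤ l ^ n * t := by nlinarith
  have hfloor : ⌊Real.logb l (l ^ n * t)⌋ = n := by
    have ht0 : (0:ℝ) < t := by linarith
    rw [Real.logb_mul (ne_of_gt hlnpos) (ne_of_gt ht0), logb_zpow' hl]
    have h1 : 0 ≤ Real.logb l t := Real.logb_nonneg hl ht1
    have h2 : Real.logb l t < 1 := by
      rw [Real.logb_lt_iff_lt_rpow hl ht0]; simpa using htl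
    rw [add_comm, Int.floor_add_intCast]
    simp [Int.floor_eq_zero_iff, Set.mem_Ico, h1, h2]
  unfold gf
  rw [if_pos hx, hfloor, mul_div_cancel_left₀ _ (ne_of_gt hlnpos)]

lemma gf_rep {n : ℤ} (hn : 0 ≤ n) {t : ℝ} (ht1 : 1 ≤ t) (htl : t ≤ l) :
    gf l (l ^ n * t) = l ^ n * g0 l t := by
  rcases eq_or_lt_of_le htl with h | h
  · rw [h, g0_self hl]
    have h1 : l ^ n * l = l ^ (n+1) * 1 := by
      rw [zpow_add₀ (ne_of_gt (lpos hl)), zpow_one]; ring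
    rw [h1, gf_rep' hl (by omega) le_rfl hl, g0_one hl,
      zpow_add₀ (ne_of_gt (lpos hl)), zpow_one, mul_one]
  · exact gf_rep' hl hn ht1 h

lemma gf_decomp {x : ℝ} (hx : 1 ≤ x) :
    ∃ n : ℤ, 0 ≤ n ∧ ∃ t, 1 ≤ t ∧ t < l ∧ x = l ^ n * t := by
  obtain ⟨h0, h1, h2⟩ := floor_spec hl hx
  set n := ⌊Real.logb l x⌋
  have hlnpos : (0:ℝ) < l ^ n := zpow_pos (lpos hl) n
  refine ⟨n, h0, x / l ^ n, ?_, ?_, ?_⟩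
  · rw [le_div_iff₀ hlnpos]; simpa using h1
  · rw [div_lt_iff₀ hlnpos]
    have : l ^ (n + 1) = l ^ n * l := by
      rw [zpow_add₀ (ne_of_gt (lpos hl)), zpow_one]
    rw [this] at h2; linarith [h2]
  · field_simp

lemma gf_id {x : ℝ} (hx : x ≤ 1) : gf l x = x := by
  rcases lt_or_eq_of_le hx with h | h
  · unfold gf; rw [if_neg (by linarith)]
  · subst h
    have := gf_rep hl (n := 0) le_rfl le_rfl hl.le
    simpa [g0_one hl] using this

lemma gf_zero : gf l 0 = 0 := gf_id hl (by norm_num)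

lemma gf_scale {r : ℤ} {x : ℝ} (hx : 1 ≤ x) (hrx : 1 ≤ l ^ r * x) :
    gf l (l ^ r * x) = l ^ r * gf l x := by
  obtain ⟨n, hn, t, ht1, htl, rfl⟩ := gf_decomp hl hx
  have hl0 : (0:ℝ) < l := lpos hl
  have key : l ^ r * (l ^ n * t) = l ^ (r + n) * t := by
    rw [zpow_add₀ (ne_of_gt hl0)]; ring
  have hrn : 0 ≤ r + n := by
    by_contra hc
    push_neg at hc
    have h1 : l ^ (r + n) ≤ l ^ (-1 : ℤ) := zpow_le_zpow_right₀ hl.le (by omega)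
    have h2 : l ^ (-1 : ℤ) = l⁻¹ := by simp
    have h3 : l ^ (r+n) * t < l⁻¹ * l := by
      apply mul_lt_mul' (h1.trans h2.le) htl (by linarith) (by positivity)
    rw [inv_mul_cancel₀ (ne_of_gt hl0)] at h3
    rw [key] at hrx
    linarith
  rw [key, gf_rep hl hrn ht1 htl.le, gf_rep hl hn ht1 htl.le,
    zpow_add₀ (ne_of_gt hl0)]
  ring

lemma gf_pow {n : ℤ} (hn : 0 ≤ n) : gf l (l ^ n) = l ^ n := by
  have := gf_rep hl hn le_rfl hl.le
  simpa [g0_one hl] using this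

lemma gf_local {k : ℕ} {x y : ℝ} (hx : (l:ℝ) ^ (k:ℤ) ≤ x) (hxy : x ≤ y)
    (hy : y ≤ l ^ ((k:ℤ) + 1)) :
    (y - x)/2 ≤ gf l y - gf l x ∧ gf l y - gf l x ≤ (3/2)*(y-x) := by
  have hl0 : (0:ℝ) < l := lpos hl
  have hpk : (0:ℝ) < l ^ (k:ℤ) := zpow_pos hl0 _
  set s := x / l ^ (k:ℤ) with hs
  set t := y / l ^ (k:ℤ) with ht
  have hxs : x = l ^ (k:ℤ) * s := by rw [hs]; field_simp
  have hyt : y = l ^ (k:ℤ) * t := by rw [ht]; field_simp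
  have hs1 : 1 ≤ s := by rw [hs, le_div_iff₀ hpk]; simpa using hx
  have hst : s ≤ t := by rw [hs, ht]; gcongr
  have htlam : t ≤ l := by
    rw [ht, div_le_iff₀ hpk]
    have : l ^ ((k:ℤ) + 1) = l * l ^ (k:ℤ) := by
      rw [zpow_add₀ (ne_of_gt hl0), zpow_one]; ring
    linarith [hy.trans this.le]
  have ht1 : 1 ≤ t := hs1.trans hst
  have hslam : s ≤ l := hst.trans htlam
  rw [hxs, hyt, gf_rep hl (by positivity) hs1 hslam, gf_rep hl (by positivity) ht1 htlam]
  obtain ⟨hb1, hb2⟩ := g0_bounds hl hst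
  constructor
  · have : l ^ (k:ℤ) * ((t - s)/2) ≤ l ^ (k:ℤ) * (g0 l t - g0 l s) := by
      apply mul_le_mul_of_nonneg_left hb1 hpk.le
    calc (l ^ (k:ℤ) * t - l ^ (k:ℤ) * s)/2 = l ^ (k:ℤ) * ((t - s)/2) := by ring
      _ ≤ l ^ (k:ℤ) * (g0 l t - g0 l s) := this
      _ = l ^ (k:ℤ) * g0 l t - l ^ (k:ℤ) * g0 l s := by ring
  · have : l ^ (k:ℤ) * (g0 l t - g0 l s) ≤ l ^ (k:ℤ) * ((3/2)*(t-s)) := by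
      apply mul_le_mul_of_nonneg_left hb2 hpk.le
    calc l ^ (k:ℤ) * g0 l t - l ^ (k:ℤ) * g0 l s = l ^ (k:ℤ) * (g0 l t - g0 l s) := by ring
      _ ≤ l ^ (k:ℤ) * ((3/2)*(t-s)) := this
      _ = (3/2)*(l ^ (k:ℤ) * t - l ^ (k:ℤ) * s) := by ring

lemma gf_bounds_aux (N : ℕ) : ∀ x y : ℝ, 0 ≤ x → x ≤ y → y ≤ l ^ (N:ℤ) →
    (y - x)/2 ≤ gf l y - gf l x ∧ gf l y - gf l x ≤ (3/2)*(y-x) := by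
  induction N with
  | zero =>
    intro x y hx hxy hy
    simp only [Nat.cast_zero, zpow_zero] at hy
    rw [gf_id hl hy, gf_id hl (hxy.trans hy)]
    constructor <;> linarith
  | succ N ih =>
    intro x y hx hxy hy
    have hl0 : (0:ℝ) < l := lpos hl
    have hcast : ((N+1 : ℕ) : ℤ) = (N:ℤ) + 1 := by push_cast; ring
    rw [hcast] at hy
    by_cases hyN : y ≤ l ^ (N:ℤ)
    · exact ih x y hx hxy hyN
    push_neg at hyN
    by_cases hxN : l ^ (N:ℤ) ≤ x
    · exact gf_local hl hxN hxy hy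
    push_neg at hxN
    obtain ⟨h1, h2⟩ := ih x (l ^ (N:ℤ)) hx hxN.le le_rfl
    obtain ⟨h3, h4⟩ := gf_local hl (le_refl (l ^ (N:ℤ))) hyN.le hy
    constructor <;> linarith

lemma gf_diff {x y : ℝ} (hx : 0 ≤ x) (hxy : x ≤ y) :
    (y - x)/2 ≤ gf l y - gf l x ∧ gf l y - gf l x ≤ (3/2)*(y-x) := by
  obtain ⟨N, hN⟩ := pow_unbounded_of_one_lt y hl
  have : y ≤ l ^ (N:ℤ) := by rw [zpow_natCast]; exact hN.le
  exact gf_bounds_aux hl N x y hx hxy this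

lemma gf_nonneg {x : ℝ} (hx : 0 ≤ x) : 0 ≤ gf l x := by
  have := (gf_diff hl le_rfl hx).1
  rw [gf_zero hl] at this
  linarith

lemma gf_mono : MonotoneOn (gf l) (Set.Ici 0) := by
  intro x hx y hy hxy
  have := (gf_diff hl hx hxy).1
  linarith

lemma gf_smon : StrictMonoOn (gf l) (Set.Ici 0) := by
  intro x hx y hy hxy
  have := (gf_diff hl hx hxy.le).1
  linarith

lemma gf_lip {x y : ℝ} (hx : 0 ≤ x) (hy : 0 ≤ y) :
    |gf l x - gf l y| ≤ (3/2) * |x - y| := by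
  rcases le_total x y with h | h
  · obtain ⟨h1, h2⟩ := gf_diff hl hx h
    rw [abs_sub_comm (gf l x), abs_of_nonneg (by linarith), abs_sub_comm x, abs_of_nonneg (by linarith)]
    linarith
  · obtain ⟨h1, h2⟩ := gf_diff hl hy h
    rw [abs_of_nonneg (by linarith), abs_of_nonneg (by linarith)]
    linarith

lemma gf_lip' {x y : ℝ} (hx : 0 ≤ x) (hy : 0 ≤ y) :
    (1/2) * |x - y| ≤ |gf l x - gf l y| := by
  rcases le_total x y with h | h
  · obtain ⟨h1, h2⟩ := gf_diff hl hx h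
    rw [abs_sub_comm x y, abs_of_nonneg (by linarith : (0:ℝ) ≤ y - x),
      abs_sub_comm (gf l x), abs_of_nonneg (by linarith)]
    linarith
  · obtain ⟨h1, h2⟩ := gf_diff hl hy h
    rw [abs_of_nonneg (by linarith), abs_of_nonneg (by linarith)]
    linarith

lemma gf_cont : ContinuousOn (gf l) (Set.Ici 0) := by
  have : LipschitzOnWith (3/2 : NNReal) (gf l) (Set.Ici 0) := by
    rw [lipschitzOnWith_iff_dist_le_mul]
    intro x hx y hy
    rw [Real.dist_eq, Real.dist_eq]
    have h := gf_lip hl (Set.mem_Ici.1 hx) (Set.mem_Ici.1 hy)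
    have h2 : ((3/2 : NNReal) : ℝ) = (3/2 : ℝ) := by norm_num
    rw [h2]
    exact h
  exact this.continuousOn

lemma gf_qi : IsQI (gf l) := by
  refine ⟨fun x hx => gf_nonneg hl hx, ⟨2, by norm_num, ?_⟩, ⟨1, one_pos, ?_⟩⟩
  · intro x y hx hy
    have h2 := gf_lip hl hx hy
    have h1 : (1/2) * |x - y| ≤ |gf l x - gf l y| := gf_lip' hl hx hy
    constructor
    · have : (0:ℝ) ≤ |x - y| := abs_nonneg _
      linarith
    · have : (0:ℝ) ≤ |x - y| := abs_nonneg _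
      linarith
  · intro z hz
    have h1 : gf l 0 = 0 := gf_zero hl
    have h2 : z ≤ gf l (2*z) := by
      have := (gf_diff hl le_rfl (by linarith : (0:ℝ) ≤ 2*z)).1
      rw [h1] at this; linarith
    have hc : ContinuousOn (gf l) (Set.Icc 0 (2*z)) :=
      (gf_cont hl).mono (fun x hx => hx.1)
    have : z ∈ Set.Icc (gf l 0) (gf l (2*z)) := by
      rw [h1]; exact ⟨hz, h2⟩
    obtain ⟨x, hx, hgx⟩ := intermediate_value_Icc (by linarith : (0:ℝ) ≤ 2*z) hc this
    refine ⟨x, hx.1, ?_⟩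
    rw [hgx, sub_self, abs_zero]
    norm_num

lemma gf_fixed {x : ℝ} (hx : 1 ≤ x) (h : gf l x = x) : ∃ n : ℤ, x = l ^ n := by
  obtain ⟨n, hn, t, ht1, htl, rfl⟩ := gf_decomp hl hx
  rw [gf_rep hl hn ht1 htl.le] at h
  have hpk : (0:ℝ) < l ^ n := zpow_pos (lpos hl) n
  have hg0 : g0 l t = t := by
    have := mul_left_cancel₀ (ne_of_gt hpk) h
    exact this
  rcases eq_or_lt_of_le ht1 with h1 | h1
  · exact ⟨n, by rw [← h1, mul_one]⟩
  · exact absurd hg0 (g0_gt hl h1 htl).ne'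

lemma gf_comm_zpow (r : ℤ) :
    ∃ C : ℝ, ∀ x : ℝ, 0 ≤ x → |gf l (l ^ r * x) - l ^ r * gf l x| ≤ C := by
  have hl0 : (0:ℝ) < l := lpos hl
  set c : ℝ := l ^ r with hc
  have hc0 : 0 < c := zpow_pos hl0 r
  set B : ℝ := max 1 (l ^ (-r)) with hB
  have hB1 : (1:ℝ) ≤ B := le_max_left _ _
  have hB0 : (0:ℝ) ≤ B := by linarith
  refine ⟨gf l (c * B) + c * gf l B, ?_⟩
  intro x hx
  by_cases hxB : B ≤ x
  · have hx1 : 1 ≤ x := hB1.trans hxB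
    have hcx : 1 ≤ c * x := by
      have h1 : l ^ (-r) ≤ x := (le_max_right _ _).trans hxB
      have h2 : c * l ^ (-r) ≤ c * x := by nlinarith
      have h3 : c * l ^ (-r) = 1 := by
        rw [hc, ← zpow_add₀ (ne_of_gt hl0)]; simp
      linarith
    rw [gf_scale hl hx1 hcx, sub_self, abs_zero]
    have h1 : 0 ≤ gf l (c * B) := gf_nonneg hl (by positivity)
    have h2 : 0 ≤ gf l B := gf_nonneg hl hB0
    nlinarith
  · push_neg at hxB
    have h1 : gf l (c * x) ≤ gf l (c * B) :=
      gf_mono hl (Set.mem_Ici.2 (by positivity)) (Set.mem_Ici.2 (by positivity)) (by nlinarith)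
    have h2 : gf l x ≤ gf l B := gf_mono hl (Set.mem_Ici.2 hx) (Set.mem_Ici.2 hB0) hxB.le
    have h3 : 0 ≤ gf l (c * x) := gf_nonneg hl (by positivity)
    have h4 : 0 ≤ gf l x := gf_nonneg hl hx
    rw [abs_sub_le_iff]
    constructor <;> nlinarith

lemma gf_rigid {c C : ℝ} (hc : 1 ≤ c)
    (h : ∀ x : ℝ, 0 ≤ x → |gf l (c * x) - c * gf l x| ≤ C) :
    ∃ n : ℤ, c = l ^ n := by
  have hl0 : (0:ℝ) < l := lpos hl
  have key : ∀ n : ℕ, |gf l c - c| * l ^ n ≤ C := by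
    intro n
    have hln : (1:ℝ) ≤ l ^ n := one_le_pow₀ hl.le
    have hx : (0:ℝ) ≤ (l ^ n : ℝ) := by positivity
    have h1 := h (l ^ n) hx
    have h2 : gf l ((l:ℝ) ^ n) = l ^ n := by
      have := gf_pow hl (n := (n:ℤ)) (Int.natCast_nonneg n)
      rwa [zpow_natCast] at this
    have h3 : gf l (c * l ^ n) = l ^ n * gf l c := by
      have hcln : 1 ≤ (l:ℝ) ^ (n:ℤ) * c := by
        rw [zpow_natCast]; nlinarith
      have := gf_scale hl (x := c) (r := (n:ℤ)) hc hcln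
      rw [zpow_natCast] at this
      rw [mul_comm c, this]
    rw [h3, h2] at h1
    calc |gf l c - c| * l ^ n = |l ^ n * gf l c - c * l ^ n| := by
          rw [show l ^ n * gf l c - c * l ^ n = (gf l c - c) * l ^ n by ring,
            abs_mul, abs_of_nonneg hx]
      _ ≤ C := h1
  have h0 : |gf l c - c| ≤ 0 := by
    by_contra hpos
    push_neg at hpos
    obtain ⟨n, hn⟩ := pow_unbounded_of_one_lt (C / |gf l c - c|) hl
    have := key n
    rw [div_lt_iff₀ hpos] at hn
    nlinarith
  have : gf l c = c := by
    have := abs_nonneg (gf l c - c)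
    have h2 : |gf l c - c| = 0 := le_antisymm h0 this
    rw [abs_eq_zero] at h2
    linarith [sub_eq_zero.1 h2]
  exact gf_fixed hl hc this

lemma gf_comm_iff {c : ℝ} (hc : 0 < c) :
    (∃ C : ℝ, ∀ x : ℝ, 0 ≤ x → |gf l (c * x) - c * gf l x| ≤ C) ↔
      ∃ rr : ℤ, c = l ^ rr := by
  constructor
  · rintro ⟨C, hC⟩
    rcases le_total 1 c with h1 | h1
    · exact gf_rigid hl h1 hC
    · have hinv : ∀ x : ℝ, 0 ≤ x → |gf l (c⁻¹ * x) - c⁻¹ * gf l x| ≤ C / c := by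
        intro x hx
        have h2 := hC (x / c) (by positivity)
        have h3 : c * (x / c) = x := by field_simp
        rw [h3] at h2
        have hAB : gf l x - c * gf l (x/c) = -c * (gf l (c⁻¹ * x) - c⁻¹ * gf l x) := by
          rw [show c⁻¹ * x = x / c by rw [inv_mul_eq_div]]
          field_simp
          ring
        rw [hAB, abs_mul, abs_neg, abs_of_pos hc] at h2
        rw [le_div_iff₀ hc]
        linarith
      have hc1 : 1 ≤ c⁻¹ := (one_le_inv₀ hc).2 h1
      obtain ⟨n, hn⟩ := gf_rigid hl hc1 hinv
      refine ⟨-n, ?_⟩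
      rw [zpow_neg, ← hn, inv_inv]
  · rintro ⟨r, rfl⟩
    exact gf_comm_zpow hl r

lemma gf_ratio_bounds : ∀ᶠ x : ℝ in atTop, gf l x / x ≤ 3/2 := by
  filter_upwards [eventually_ge_atTop (1:ℝ)] with x hx
  have hx0 : (0:ℝ) < x := by linarith
  have := (gf_diff hl (le_refl 0) (by linarith : (0:ℝ) ≤ x)).2
  rw [gf_zero hl] at this
  rw [div_le_iff₀ hx0]
  linarith

lemma gf_ratio_lower : ∀ᶠ x : ℝ in atTop, (0:ℝ) ≤ gf l x / x := by
  filter_upwards [eventually_ge_atTop (1:ℝ)] with x hx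
  have hx0 : (0:ℝ) < x := by linarith
  exact div_nonneg (gf_nonneg hl (by linarith)) hx0.le

lemma gf_liminf : liminf (fun x : ℝ => gf l x / x) atTop ≤ 1 := by
  apply Filter.liminf_le_of_frequently_le
  · rw [Filter.frequently_atTop]
    intro a
    obtain ⟨n, hn⟩ := pow_unbounded_of_one_lt (max a 1) hl
    refine ⟨l ^ n, le_trans (le_max_left a 1) hn.le, ?_⟩
    have h2 : gf l ((l:ℝ) ^ n) = l ^ n := by
      have := gf_pow hl (n := (n:ℤ)) (Int.natCast_nonneg n)
      rwa [zpow_natCast] at this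
    have hp : (0:ℝ) < l ^ n := by positivity
    rw [h2, div_self (ne_of_gt hp)]
  · exact ⟨0, gf_ratio_lower hl⟩

lemma gf_limsup : (1 + 3*l) / (2*(1+l)) ≤ limsup (fun x : ℝ => gf l x / x) atTop := by
  have hl0 : (0:ℝ) < l := lpos hl
  set m : ℝ := (1+l)/2 with hm
  have hm1 : 1 < m := by rw [hm]; linarith
  have hml : m < l := by rw [hm]; linarith
  have hg0m : g0 l m = (m + l)/2 := by
    unfold g0
    rw [min_eq_right]
    rw [hm]; linarith
  apply Filter.le_limsup_of_frequently_le
  · rw [Filter.frequently_atTop]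
    intro a
    obtain ⟨n, hn⟩ := pow_unbounded_of_one_lt (max a 1) hl
    refine ⟨l ^ n * m, ?_, ?_⟩
    · have h1 : (1:ℝ) ≤ l ^ n * m := by nlinarith [pow_pos hl0 n, (one_le_pow₀ hl.le : (1:ℝ) ≤ l ^ n)]
      have : max a 1 ≤ l ^ n := hn.le
      nlinarith [le_max_left a 1, pow_pos hl0 n, (one_le_pow₀ hl.le : (1:ℝ) ≤ l ^ n)]
    · have hrep : gf l ((l:ℝ) ^ n * m) = l ^ n * g0 l m := by
        have := gf_rep hl (n := (n:ℤ)) (Int.natCast_nonneg n) hm1.le hml.le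
        rwa [zpow_natCast] at this
      rw [hrep, hg0m]
      have hp : (0:ℝ) < l ^ n := by positivity
      rw [le_div_iff₀ (by positivity : (0:ℝ) < l ^ n * m)]
      have : (1 + 3*l) / (2*(1+l)) * (l ^ n * m) = l ^ n * ((m+l)/2) := by
        rw [hm]; field_simp; ring
      rw [this]
  · exact ⟨3/2, gf_ratio_bounds hl⟩

lemma gf_liminf_lt_limsup :
    liminf (fun x : ℝ => gf l x / x) atTop < limsup (fun x : ℝ => gf l x / x) atTop := by
  have h1 := gf_liminf hl
  have h2 := gf_limsup hl
  have h3 : (1:ℝ) < (1 + 3*l) / (2*(1+l)) := by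
    rw [lt_div_iff₀ (by linarith : (0:ℝ) < 2*(1+l))]
    linarith
  linarith

lemma gf_line1 {k : ℕ} {x : ℝ} (h1 : (l:ℝ)^k ≤ x) (h2 : x ≤ (1+l)/2 * l^k) :
    gf l x = (3/2)*x - l^k/2 := by
  have hl0 : (0:ℝ) < l := lpos hl
  have hp : (0:ℝ) < l^k := by positivity
  set t : ℝ := x / l^k with ht
  have hxt : x = (l:ℝ)^k * t := by rw [ht]; field_simp
  have ht1 : 1 ≤ t := by rw [ht, le_div_iff₀ hp]; simpa using h1
  have htm : t ≤ (1+l)/2 := by rw [ht, div_le_iff₀ hp]; linarith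
  have htl : t ≤ l := by linarith
  have hrep : gf l x = (l:ℝ)^k * g0 l t := by
    rw [hxt]
    have := gf_rep hl (n := (k:ℤ)) (Int.natCast_nonneg k) ht1 htl
    rwa [zpow_natCast] at this
  have hg0 : g0 l t = (3/2)*t - 1/2 := by
    unfold g0; rw [min_eq_left]; linarith
  rw [hrep, hg0, hxt]; ring

lemma gf_line2 {k : ℕ} {x : ℝ} (h1 : (1+l)/2 * l^k ≤ x) (h2 : x ≤ (l:ℝ)^(k+1)) :
    gf l x = x/2 + l^(k+1)/2 := by
  have hl0 : (0:ℝ) < l := lpos hl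
  have hp : (0:ℝ) < l^k := by positivity
  set t : ℝ := x / l^k with ht
  have hxt : x = (l:ℝ)^k * t := by rw [ht]; field_simp
  have htm : (1+l)/2 ≤ t := by rw [ht, le_div_iff₀ hp]; linarith
  have ht1 : 1 ≤ t := by linarith
  have htl : t ≤ l := by
    rw [ht, div_le_iff₀ hp]
    have : (l:ℝ)^(k+1) = l * l^k := by ring
    linarith [h2.trans_eq this]
  have hrep : gf l x = (l:ℝ)^k * g0 l t := by
    rw [hxt]
    have := gf_rep hl (n := (k:ℤ)) (Int.natCast_nonneg k) ht1 htl
    rwa [zpow_natCast] at this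
  have hg0 : g0 l t = (t + l)/2 := by
    unfold g0; rw [min_eq_right]; linarith
  rw [hrep, hg0, hxt]
  have : (l:ℝ)^(k+1) = l^k * l := by ring
  rw [this]; ring

end lemmas

noncomputable def bp (l : ℝ) (n : ℕ) : ℝ :=
  if n = 0 then 0 else if n % 2 = 1 then l ^ ((n-1)/2) else ((1+l)/2) * l ^ ((n-2)/2)

section pl
variable {l : ℝ} (hl : 1 < l)
include hl
set_option linter.unusedSectionVars false

lemma bp_zero : bp l 0 = 0 := by simp [bp]

lemma bp_odd (k : ℕ) : bp l (2*k+1) = l ^ k := by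
  unfold bp
  rw [if_neg (by omega), if_pos (by omega)]
  congr 1
  omega

lemma bp_even (k : ℕ) : bp l (2*k+2) = ((1+l)/2) * l ^ k := by
  unfold bp
  rw [if_neg (by omega), if_neg (by omega)]
  congr 2
  omega

lemma bp_mono : StrictMono (bp l) := by
  have hl0 : (0:ℝ) < l := lpos hl
  apply strictMono_nat_of_lt_succ
  intro n
  rcases Nat.even_or_odd n with ⟨k, hk⟩ | ⟨k, hk⟩
  · rcases Nat.eq_zero_or_pos k with rfl | hkpos
    · have hn : n = 0 := by omega
      subst hn
      rw [bp_zero hl, show (0+1) = 2*0+1 from rfl, bp_odd hl]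
      norm_num
    · obtain ⟨j, rfl⟩ : ∃ j, k = j + 1 := ⟨k - 1, by omega⟩
      have hn : n = 2*j+2 := by omega
      subst hn
      rw [bp_even hl, show 2*j+2+1 = 2*(j+1)+1 from rfl, bp_odd hl]
      have hp : (0:ℝ) < l^j := by positivity
      have : (l:ℝ)^(j+1) = l * l^j := by ring
      rw [this]
      nlinarith
  · have hn : n = 2*k+1 := by omega
    subst hn
    rw [bp_odd hl, show 2*k+1+1 = 2*k+2 from rfl, bp_even hl]
    have hp : (0:ℝ) < l^k := by positivity
    nlinarith

lemma bp_tendsto : Tendsto (bp l) atTop atTop := by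
  apply tendsto_atTop_atTop_of_monotone (bp_mono hl).monotone
  intro b
  obtain ⟨k, hk⟩ := pow_unbounded_of_one_lt b hl
  exact ⟨2*k+1, by rw [bp_odd hl]; linarith⟩

lemma gf_pl : IsPL (gf l) := by
  have hl0 : (0:ℝ) < l := lpos hl
  refine ⟨bp l, bp_zero hl, bp_mono hl, bp_tendsto hl, ?_⟩
  intro n
  rcases Nat.even_or_odd n with ⟨k, hk⟩ | ⟨k, hk⟩
  · rcases Nat.eq_zero_or_pos k with rfl | hkpos
    · have hn : n = 0 := by omega
      subst hn
      refine ⟨1, ?_⟩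
      intro x hx
      rw [bp_zero hl] at hx ⊢
      rw [show (0+1) = 2*0+1 from rfl, bp_odd hl] at hx
      simp only [pow_zero] at hx
      rw [gf_id hl hx.2, gf_zero hl]
      ring
    · obtain ⟨j, rfl⟩ : ∃ j, k = j + 1 := ⟨k - 1, by omega⟩
      have hn : n = 2*j+2 := by omega
      subst hn
      refine ⟨1/2, ?_⟩
      intro x hx
      rw [bp_even hl] at hx ⊢
      rw [show 2*j+2+1 = 2*(j+1)+1 from rfl, bp_odd hl] at hx
      have hm : (1:ℝ) ≤ (1+l)/2 := by linarith
      have hp : (0:ℝ) < l^j := by positivity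
      have hx1 := hx.1
      have hx2 := hx.2
      rw [gf_line2 hl hx1 hx2, gf_line2 hl (le_refl _) (by nlinarith : ((1+l)/2) * l^j ≤ (l:ℝ)^(j+1))]
      ring
  · have hn : n = 2*k+1 := by omega
    subst hn
    refine ⟨3/2, ?_⟩
    intro x hx
    rw [bp_odd hl] at hx ⊢
    rw [show 2*k+1+1 = 2*k+2 from rfl, bp_even hl] at hx
    have hp : (0:ℝ) < l^k := by positivity
    rw [gf_line1 hl hx.1 hx.2, gf_line1 hl (le_refl _) (by nlinarith : (l:ℝ)^k ≤ ((1+l)/2) * l^k)]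
    ring

end pl


/-- for every `λ > 1` there is a strictly increasing continuous
piecewise-linear quasi-isometry `g` of `[0,∞)` which (i) almost-commutes with `x ↦ λx`,
(ii) has `g x / x` non-convergent (`liminf < limsup`), and (iii) almost-commutes with
`x ↦ cx` (for `c > 0`) iff `c = λ^r` for some integer `r`. -/
theorem stmt14 (lam : ℝ) (hlam : 1 < lam) :
    ∃ g : ℝ → ℝ, StrictMonoOn g (Set.Ici 0) ∧ ContinuousOn g (Set.Ici 0) ∧
      IsPL g ∧ IsQI g ∧
      (∃ C : ℝ, ∀ x : ℝ, 0 ≤ x → |g (lam * x) - lam * g x| ≤ C) ∧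
      (liminf (fun x : ℝ => g x / x) atTop < limsup (fun x : ℝ => g x / x) atTop) ∧
      (∀ c : ℝ, 0 < c →
        ((∃ C : ℝ, ∀ x : ℝ, 0 ≤ x → |g (c * x) - c * g x| ≤ C) ↔
          ∃ rr : ℤ, c = lam ^ rr)) := by
  refine ⟨gf lam, gf_smon hlam, gf_cont hlam, gf_pl hlam, gf_qi hlam, ?_,
    gf_liminf_lt_limsup hlam, fun c hc => gf_comm_iff hlam hc⟩
  have := gf_comm_zpow hlam 1
  rwa [zpow_one] at this
end

section
/- Let f, g : [0,∞) → [0,∞) be strictly increasing piecewise-linear quasi-isometries and let (a_n) be a strictly increasing sequence tending to ∞ with a_1 > 0 and f(a_n) = g(a_n) = a_n for all n. Suppose for each n there is a point x_n ∈ (a_n, a_{n+1}) such that f is affine with slope λ_n on [a_n, x_n] and with slope μ_n on [x_n, a_{n+1}], and g is affine with slope λ'_n on [a_n, x_n] and with slope μ'_n on [x_n, a_{n+1}]. Assume there is L > 1 with 1/L ≤ λ_n, μ_n, λ'_n, μ'_n ≤ L for all n, that liminf_{x→∞} f(x)/x ≥ 1 and liminf_{x→∞} g(x)/x ≥ 1,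 and that there exist ε > 0 and constants K, K' > 1 such that |λ_n − 1| > ε, |λ'_n − 1| > ε, |λ_n − λ'_n| > ε, and K < x_n/a_n < K' and K < a_{n+1}/x_n < K' for all n. Then for all quasi-isometries h, h' of [0,∞) with h(x)/x → 1 and h'(x)/x → 1 as x → ∞, the maps h∘f and h'∘g do not commute in QI(ℝ₊); that is, sup_{x≥0} |h(f(h'(g(x)))) − h'(g(h(f(x))))| = ∞. -/
open Filter Topology

lemma nearId (h : ℝ → ℝ) (hh : Tendsto (fun t => h t / t) atTop (𝓝 1))
    (η : ℝ) (hη : 0 < η) : ∃ M : ℝ, 1 ≤ M ∧ ∀ s, M ≤ s → |h s - s| ≤ η * s := by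
  have h2 : ∀ᶠ t in atTop, |h t / t - 1| < η := by
    have := Metric.tendsto_nhds.mp hh η hη
    simpa [Real.dist_eq] using this
  obtain ⟨M0, hM0⟩ := eventually_atTop.mp h2
  refine ⟨max M0 1, le_max_right _ _, ?_⟩
  intro s hs
  have hs1 : (1:ℝ) ≤ s := le_trans (le_max_right M0 1) hs
  have hs0 : 0 < s := by linarith
  have h3 := hM0 s (le_trans (le_max_left _ _) hs)
  have h4 : h s - s = (h s / s - 1) * s := by field_simp
  rw [h4, abs_mul, abs_of_pos hs0]
  exact mul_le_mul_of_nonneg_right h3.le hs0.le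

lemma evSlope (f : ℝ → ℝ) (a x lam : ℕ → ℝ) (eps K : ℝ)
    (ha : ∀ n, 0 < a n) (hxa : ∀ n, a n < x n)
    (hfx : ∀ n, f (x n) = a n + lam n * (x n - a n))
    (heps : 0 < eps) (hK : 1 < K)
    (hsep : ∀ n, eps < |lam n - 1|)
    (hratio : ∀ n, K < x n / a n)
    (hat : Tendsto a atTop atTop)
    (hfnn : ∀ t, 0 ≤ t → 0 ≤ f t)
    (hfinf : 1 ≤ liminf (fun t : ℝ => f t / t) atTop) :
    ∀ᶠ n in atTop, 1 + eps < lam n := by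
  by_contra hcon
  rw [not_eventually] at hcon
  have hK0 : (0:ℝ) < K := by linarith
  have hb1 : 1 - eps * (1 - 1/K) < 1 := by
    have h1 : 1/K < 1 := by
      rw [div_lt_one hK0]; linarith
    nlinarith [mul_pos heps (show (0:ℝ) < 1 - 1/K by linarith)]
  have hfreq : ∃ᶠ n in atTop, f (x n) / x n ≤ 1 - eps * (1 - 1/K) := by
    refine hcon.mono ?_
    intro n hn
    push_neg at hn
    have hlt : lam n < 1 - eps := by
      rcases lt_or_ge (lam n) 1 with hc | hc
      · have := hsep n
        rw [abs_of_neg (by linarith)] at this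
        linarith
      · have := hsep n
        rw [abs_of_nonneg (by linarith)] at this
        linarith
    have hXpos : 0 < x n := lt_trans (ha n) (hxa n)
    have hKa : K * a n < x n := by
      have := hratio n
      rw [lt_div_iff₀ (ha n)] at this
      linarith
    rw [div_le_iff₀ hXpos, hfx n]
    have hint1 : lam n * (x n - a n) < (1 - eps) * (x n - a n) :=
      mul_lt_mul_of_pos_right hlt (by linarith [hxa n])
    have h8 : eps * a n ≤ eps * x n * (1/K) := by
      rw [mul_one_div, le_div_iff₀ hK0]
      nlinarith
    nlinarith
  have htx : Tendsto x atTop atTop :=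
    tendsto_atTop_mono (fun n => (hxa n).le) hat
  have hfreq2 : ∃ᶠ s in atTop, f s / s ≤ 1 - eps * (1 - 1/K) := htx.frequently hfreq
  have hbdd : IsBoundedUnder (· ≥ ·) (atTop : Filter ℝ) (fun t => f t / t) := by
    refine isBoundedUnder_of_eventually_ge (a := (0:ℝ)) ?_
    filter_upwards [eventually_ge_atTop (1:ℝ)] with t ht
    exact div_nonneg (hfnn t (by linarith)) (by linarith)
  have := liminf_le_of_frequently_le hfreq2 hbdd
  linarith

lemma lipOn (f : ℝ → ℝ) (a x : ℕ → ℝ) (lam mu : ℕ → ℝ) (L : ℝ)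
    (hx : ∀ n, a n < x n ∧ x n < a (n+1))
    (hf1 : ∀ n, ∀ t ∈ Set.Icc (a n) (x n), f t = f (a n) + lam n * (t - a n))
    (hf2 : ∀ n, ∀ t ∈ Set.Icc (x n) (a (n + 1)), f t = f (x n) + mu n * (t - x n))
    (hlam : ∀ n, lam n ≤ L) (hmu : ∀ n, mu n ≤ L)
    (hat : Tendsto a atTop atTop) :
    ∀ u v, a 0 ≤ u → u ≤ v → f v - f u ≤ L * (v - u) := by
  have loc : ∀ n, ∀ u v, a n ≤ u → u ≤ v → v ≤ a (n+1) → f v - f u ≤ L * (v - u) := by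
    intro n u v h1 h2 h3
    rcases le_or_gt v (x n) with hv | hv
    · rw [hf1 n v ⟨le_trans h1 h2, hv⟩, hf1 n u ⟨h1, le_trans h2 hv⟩]
      have h4 := mul_le_mul_of_nonneg_right (hlam n) (sub_nonneg.2 h2)
      nlinarith
    · rcases le_or_gt (x n) u with hu | hu
      · rw [hf2 n v ⟨le_trans hu h2, h3⟩, hf2 n u ⟨hu, le_trans h2 h3⟩]
        have h4 := mul_le_mul_of_nonneg_right (hmu n) (sub_nonneg.2 h2)
        nlinarith
      · rw [hf2 n v ⟨hv.le, h3⟩, hf1 n u ⟨h1, hu.le⟩,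
          hf1 n (x n) ⟨(hx n).1.le, le_refl _⟩]
        have h4 := mul_le_mul_of_nonneg_right (hlam n) (sub_nonneg.2 hu.le)
        have h5 := mul_le_mul_of_nonneg_right (hmu n) (sub_nonneg.2 hv.le)
        nlinarith
  have main : ∀ n, ∀ u v, a 0 ≤ u → u ≤ v → v ≤ a n → f v - f u ≤ L * (v - u) := by
    intro n
    induction n with
    | zero =>
      intro u v h1 h2 h3
      have h4 : u = v := le_antisymm h2 (le_trans h3 h1)
      subst h4
      simp
    | succ n ih =>
      intro u v h1 h2 h3
      rcases le_or_gt v (a n) with h4 | h4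
      · exact ih u v h1 h2 h4
      · rcases le_or_gt (a n) u with h5 | h5
        · exact loc n u v h5 h2 h3
        · have e1 := ih u (a n) h1 h5.le (le_refl _)
          have e2 := loc n (a n) v (le_refl _) h4.le h3
          linarith
  intro u v h1 h2
  obtain ⟨n, hn⟩ := (hat.eventually_ge_atTop v).exists
  exact main n u v h1 h2 hn

set_option maxHeartbeats 1000000 in
lemma core (f g : ℝ → ℝ) (A X B lam mu lam' mu' L eps K : ℝ)
    (hA : 0 < A) (hAX : A < X) (hXB : X < B)
    (hKA : K * A < X) (hKX : K * X < B)
    (hfA : ∀ t ∈ Set.Icc A X, f t = A + lam * (t - A))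
    (hgA : ∀ t ∈ Set.Icc A X, g t = A + lam' * (t - A))
    (hfX : ∀ t ∈ Set.Icc X B, f t = f X + mu * (t - X))
    (hgX : ∀ t ∈ Set.Icc X B, g t = g X + mu' * (t - X))
    (hfB : f B = B) (hgB : g B = B)
    (hL : 1 < L) (heps : 0 < eps) (hK : 1 < K)
    (hlamL : lam ≤ L) (hlam'L : lam' ≤ L)
    (hlam' : 1 + eps < lam') (hll : eps < lam - lam')
    (hmu : 0 < mu) (hmu' : 0 < mu') :
    ∃ t, A ≤ t ∧ t ≤ B ∧ A ≤ f t ∧ f t ≤ B ∧ A ≤ g t ∧ g t ≤ B ∧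
      A ≤ f (g t) ∧ f (g t) ≤ B ∧ A ≤ g (f t) ∧ g (f t) ≤ B ∧
      eps * min (eps / (L*L)) (1/L) * (K-1) * A ≤ f (g t) - g (f t) := by
  have hlam1 : 1 < lam := by linarith
  have hlampos : 0 < lam := by linarith
  have hlam'pos : 0 < lam' := by linarith
  have hKA0 : (0:ℝ) ≤ (K-1)*A := mul_nonneg (by linarith) hA.le
  have hKA' : (K-1)*A ≤ X - A := by linarith
  obtain ⟨δ1, hδ1def⟩ : ∃ d : ℝ, d = (X - A) * (lam - lam') / (lam * lam') := ⟨_, rfl⟩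
  obtain ⟨δ2, hδ2def⟩ : ∃ d : ℝ, d = (B - X) / lam := ⟨_, rfl⟩
  have hδ1 : 0 < δ1 := hδ1def ▸ div_pos (mul_pos (by linarith) (by linarith)) (mul_pos hlampos hlam'pos)
  have hδ2 : 0 < δ2 := hδ2def ▸ div_pos (by linarith) hlampos
  obtain ⟨δ, hδdef⟩ : ∃ d : ℝ, d = min δ1 δ2 := ⟨_, rfl⟩
  have hδ : 0 < δ := hδdef ▸ lt_min hδ1 hδ2
  obtain ⟨s, hsdef⟩ : ∃ d : ℝ, d = (X - A)/lam + δ := ⟨_, rfl⟩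
  have hs0 : 0 < s := by
    have := div_pos (show (0:ℝ) < X - A by linarith) hlampos
    rw [hsdef]; linarith
  have e2 : lam * s = X - A + lam * δ := by
    rw [hsdef, mul_add, mul_div_cancel₀ _ (ne_of_gt hlampos)]
  have key1 : lam' * s ≤ X - A := by
    have hd : δ ≤ δ1 := by rw [hδdef]; exact min_le_left _ _
    have e1 : lam' * ((X - A)/lam + δ1) = X - A := by
      rw [hδ1def]; field_simp; ring
    have h' : s ≤ (X - A)/lam + δ1 := by rw [hsdef]; linarith
    calc lam' * s ≤ lam' * ((X - A)/lam + δ1) := mul_le_mul_of_nonneg_left h' hlam'pos.le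
      _ = X - A := e1
  have key2 : lam * δ ≤ B - X := by
    have hd : δ ≤ δ2 := by rw [hδdef]; exact min_le_right _ _
    have h' : lam * δ ≤ lam * δ2 := mul_le_mul_of_nonneg_left hd hlampos.le
    have e1 : lam * δ2 = B - X := by
      rw [hδ2def, mul_div_cancel₀ _ (ne_of_gt hlampos)]
    linarith
  have hsX : A + s ≤ X := by
    have h1 : 0 ≤ (lam' - 1) * s := mul_nonneg (by linarith) hs0.le
    linarith [key1]
  have htmem : A + s ∈ Set.Icc A X := ⟨by linarith, hsX⟩
  have hgt : g (A + s) = A + lam' * s := by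
    rw [hgA _ htmem]; ring_nf
  have hl's : 0 ≤ lam' * s := mul_nonneg hlam'pos.le hs0.le
  have hgtmem : A + lam' * s ∈ Set.Icc A X := ⟨by linarith, by linarith [key1]⟩
  have hfgt : f (g (A + s)) = A + lam * (lam' * s) := by
    rw [hgt, hfA _ hgtmem]; ring_nf
  have hft : f (A + s) = X + lam * δ := by
    rw [hfA _ htmem]
    have h1 : A + s - A = s := by ring
    rw [h1, e2]; ring
  have hld : 0 ≤ lam * δ := mul_nonneg hlampos.le hδ.le
  have hftmem : X + lam * δ ∈ Set.Icc X B := ⟨by linarith, by linarith [key2]⟩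
  have hgXv : g X = A + lam' * (X - A) := by
    rw [hgA X ⟨hAX.le, le_refl X⟩]
  have hfXv : f X = A + lam * (X - A) := by
    rw [hfA X ⟨hAX.le, le_refl X⟩]
  have hgft : g (f (A + s)) = A + lam' * (X - A) + mu' * (lam * δ) := by
    rw [hft, hgX _ hftmem, hgXv]; ring_nf
  have rel : A + lam' * (X - A) + mu' * (B - X) = B := by
    have h1 := hgX B ⟨hXB.le, le_refl B⟩
    rw [hgB, hgXv] at h1
    linarith
  have relf : A + lam * (X - A) + mu * (B - X) = B := by
    have h1 := hfX B ⟨hXB.le, le_refl B⟩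
    rw [hfB, hfXv] at h1
    linarith
  have hsep2 : eps ≤ lam' - mu' := by
    have w1 : (lam' - mu') * (B - X) = (lam' - 1) * (B - A) := by linear_combination -rel
    have w2 : eps * (B - X) ≤ (lam' - 1) * (B - A) :=
      mul_le_mul (by linarith) (by linarith) (by linarith) (by linarith)
    have w3 : eps * (B - X) ≤ (lam' - mu') * (B - X) := by linarith
    exact le_of_mul_le_mul_right (by linarith [w3]) (show (0:ℝ) < B - X by linarith)
  have gap : f (g (A + s)) - g (f (A + s)) = lam * δ * (lam' - mu') := by
    rw [hfgt, hgft]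
    linear_combination lam' * e2
  have hLL : (0:ℝ) < L * L := mul_pos (by linarith) (by linarith)
  have hmin : 0 < min (eps / (L*L)) (1/L) :=
    lt_min (div_pos heps hLL) (by positivity)
  have hδlow : min (eps / (L*L)) (1/L) * ((K-1)*A) ≤ δ := by
    have hb1 : min (eps / (L*L)) (1/L) * ((K-1)*A) ≤ (eps / (L*L)) * ((K-1)*A) :=
      mul_le_mul_of_nonneg_right (min_le_left _ _) hKA0
    have hb2 : min (eps / (L*L)) (1/L) * ((K-1)*A) ≤ (1/L) * ((K-1)*A) :=
      mul_le_mul_of_nonneg_right (min_le_right _ _) hKA0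
    have hd1 : (eps / (L*L)) * ((K-1)*A) ≤ δ1 := by
      rw [hδ1def, div_mul_eq_mul_div, div_le_div_iff₀ hLL (mul_pos hlampos hlam'pos)]
      have q1 : eps * ((K-1)*A) ≤ (lam - lam') * (X - A) :=
        mul_le_mul hll.le hKA' hKA0 (by linarith)
      have q2 : lam * lam' ≤ L * L := mul_le_mul hlamL hlam'L hlam'pos.le (by linarith)
      have q3 := mul_le_mul q1 q2 (mul_pos hlampos hlam'pos).le
        (mul_nonneg (by linarith) (by linarith))
      linarith [q3]
    have hd2 : (1/L) * ((K-1)*A) ≤ δ2 := by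
      rw [hδ2def, one_div, inv_mul_eq_div, div_le_div_iff₀ (by linarith) hlampos]
      have hBX : (K-1)*A ≤ B - X := by
        have w := mul_le_mul_of_nonneg_left hAX.le (show (0:ℝ) ≤ K-1 by linarith)
        linarith [w]
      have q3 := mul_le_mul hBX hlamL hlampos.le (by linarith : (0:ℝ) ≤ B - X)
      linarith [q3]
    rcases le_total δ1 δ2 with hc | hc
    · rw [hδdef, min_eq_left hc]; linarith
    · rw [hδdef, min_eq_right hc]; linarith
  refine ⟨A + s, by linarith, by linarith [hsX, hXB], ?_⟩
  rw [hfgt, hgft, hft, hgt]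
  have hfgtB : A + lam * (lam' * s) ≤ B := by
    have h1 : lam * (lam' * s) ≤ lam * (X - A) := mul_le_mul_of_nonneg_left key1 hlampos.le
    have h2 : 0 < mu * (B - X) := mul_pos hmu (by linarith)
    linarith [relf]
  have hgftB : A + lam' * (X - A) + mu' * (lam * δ) ≤ B := by
    have h1 : mu' * (lam * δ) ≤ mu' * (B - X) := mul_le_mul_of_nonneg_left key2 hmu'.le
    linarith [rel]
  have hlXA : 0 ≤ lam' * (X - A) := mul_nonneg hlam'pos.le (by linarith)
  refine ⟨by linarith, by linarith [key2, hXB], by linarith, by linarith [key1],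
    by linarith [mul_nonneg hlampos.le hl's], hfgtB,
    by linarith [mul_nonneg hmu'.le hld], hgftB, ?_⟩
  have b1 : δ * eps ≤ δ * (lam' - mu') := mul_le_mul_of_nonneg_left hsep2 hδ.le
  have b2 : δ * (lam' - mu') ≤ lam * (δ * (lam' - mu')) :=
    le_mul_of_one_le_left (by linarith [b1, mul_pos hδ heps]) hlam1.le
  have b3 : eps * (min (eps / (L*L)) (1/L) * ((K-1)*A)) ≤ eps * δ :=
    mul_le_mul_of_nonneg_left hδlow heps.le
  linarith [b1, b2, b3]

set_option maxHeartbeats 1000000 in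
/-- under the slope-separation and ratio hypotheses on the two-piece
piecewise-linear quasi-isometries `f, g` fixing each `aₙ`, for all quasi-isometries
`h, h'` with `h(x)/x → 1` and `h'(x)/x → 1`, the maps `h∘f` and `h'∘g` do not commute
in `QI(ℝ₊)`. -/
theorem stmt15 (f g : ℝ → ℝ) (hf : IsQI f) (hg : IsQI g)
    (hfm : StrictMonoOn f (Set.Ici 0)) (hgm : StrictMonoOn g (Set.Ici 0))
    (hfpl : IsPL f) (hgpl : IsPL g)
    (a : ℕ → ℝ) (ha0 : 0 < a 0) (ham : StrictMono a) (hat : Tendsto a atTop atTop)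
    (hfa : ∀ n, f (a n) = a n) (hga : ∀ n, g (a n) = a n)
    (x : ℕ → ℝ) (hx : ∀ n, x n ∈ Set.Ioo (a n) (a (n + 1)))
    (lam mu lam' mu' : ℕ → ℝ)
    (hf1 : ∀ n, ∀ t ∈ Set.Icc (a n) (x n), f t = f (a n) + lam n * (t - a n))
    (hf2 : ∀ n, ∀ t ∈ Set.Icc (x n) (a (n + 1)), f t = f (x n) + mu n * (t - x n))
    (hg1 : ∀ n, ∀ t ∈ Set.Icc (a n) (x n), g t = g (a n) + lam' n * (t - a n))
    (hg2 : ∀ n, ∀ t ∈ Set.Icc (x n) (a (n + 1)), g t = g (x n) + mu' n * (t - x n))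
    (L : ℝ) (hL : 1 < L)
    (hbound : ∀ n, 1 / L ≤ lam n ∧ lam n ≤ L ∧ 1 / L ≤ mu n ∧ mu n ≤ L ∧
      1 / L ≤ lam' n ∧ lam' n ≤ L ∧ 1 / L ≤ mu' n ∧ mu' n ≤ L)
    (hfinf : 1 ≤ liminf (fun t : ℝ => f t / t) atTop)
    (hginf : 1 ≤ liminf (fun t : ℝ => g t / t) atTop)
    (eps : ℝ) (heps : 0 < eps) (K K' : ℝ) (hK : 1 < K) (hK' : 1 < K')
    (hsep : ∀ n, eps < |lam n - 1| ∧ eps < |lam' n - 1| ∧ eps < |lam n - lam' n|)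
    (hratio : ∀ n, K < x n / a n ∧ x n / a n < K' ∧
      K < a (n + 1) / x n ∧ a (n + 1) / x n < K') :
    ∀ h h' : ℝ → ℝ, IsQI h → IsQI h' →
      Tendsto (fun t => h t / t) atTop (𝓝 1) →
      Tendsto (fun t => h' t / t) atTop (𝓝 1) →
      ¬ ∃ C : ℝ, ∀ t : ℝ, 0 ≤ t →
        |h (f (h' (g t))) - h' (g (h (f t)))| ≤ C := by
  intro h h' hQIh hQIh' hht hht'
  rintro ⟨C, hC⟩
  have hL0 : (0:ℝ) < L := by linarith only [hL]
  have hK'0 : (0:ℝ) < K' := by linarith only [hK']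
  have hapos : ∀ n, 0 < a n := fun n => lt_of_lt_of_le ha0 (ham.monotone (Nat.zero_le n))
  have hxpos : ∀ n, 0 < x n := fun n => lt_trans (hapos n) (hx n).1
  have hKA : ∀ n, K * a n < x n := fun n => by
    have h1 := (hratio n).1; rw [lt_div_iff₀ (hapos n)] at h1; linarith only [h1]
  have hKX : ∀ n, K * x n < a (n+1) := fun n => by
    have h1 := (hratio n).2.2.1; rw [lt_div_iff₀ (hxpos n)] at h1; linarith only [h1]
  have hXK' : ∀ n, x n < K' * a n := fun n => by
    have h1 := (hratio n).2.1; rw [div_lt_iff₀ (hapos n)] at h1; linarith only [h1]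
  have hBK' : ∀ n, a (n+1) < K' * x n := fun n => by
    have h1 := (hratio n).2.2.2; rw [div_lt_iff₀ (hxpos n)] at h1; linarith only [h1]
  have hBK2 : ∀ n, a (n+1) ≤ K' * K' * a n := fun n => by
    have h1 := hBK' n
    have h2 := mul_lt_mul_of_pos_left (hXK' n) hK'0
    linarith only [h1, h2]
  -- Lipschitz bounds
  have lipf0 := lipOn f a x lam mu L (fun n => ⟨(hx n).1, (hx n).2⟩) hf1 hf2
      (fun n => (hbound n).2.1) (fun n => (hbound n).2.2.2.1) hat
  have lipg0 := lipOn g a x lam' mu' L (fun n => ⟨(hx n).1, (hx n).2⟩) hg1 hg2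
      (fun n => (hbound n).2.2.2.2.2.1) (fun n => (hbound n).2.2.2.2.2.2.2) hat
  have hfmono : ∀ {u v : ℝ}, 0 ≤ u → u ≤ v → f u ≤ f v := fun {u v} hu huv =>
    hfm.monotoneOn (Set.mem_Ici.2 hu) (Set.mem_Ici.2 (le_trans hu huv)) huv
  have hgmono : ∀ {u v : ℝ}, 0 ≤ u → u ≤ v → g u ≤ g v := fun {u v} hu huv =>
    hgm.monotoneOn (Set.mem_Ici.2 hu) (Set.mem_Ici.2 (le_trans hu huv)) huv
  have lipf : ∀ u v, a 0 ≤ u → a 0 ≤ v → |f u - f v| ≤ L * |u - v| := by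
    intro u v hu hv
    rcases le_total u v with hc | hc
    · have h1 : |f u - f v| = f v - f u := by
        rw [abs_sub_comm, abs_of_nonneg (sub_nonneg.2 (hfmono (by linarith only [ha0, hu]) hc))]
      have h2 : |u - v| = v - u := by
        rw [abs_sub_comm, abs_of_nonneg (sub_nonneg.2 hc)]
      rw [h1, h2]; exact lipf0 u v hu hc
    · have h1 : |f u - f v| = f u - f v :=
        abs_of_nonneg (sub_nonneg.2 (hfmono (by linarith only [ha0, hv]) hc))
      have h2 : |u - v| = u - v := abs_of_nonneg (sub_nonneg.2 hc)
      rw [h1, h2]; exact lipf0 v u hv hc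
  have lipg : ∀ u v, a 0 ≤ u → a 0 ≤ v → |g u - g v| ≤ L * |u - v| := by
    intro u v hu hv
    rcases le_total u v with hc | hc
    · have h1 : |g u - g v| = g v - g u := by
        rw [abs_sub_comm, abs_of_nonneg (sub_nonneg.2 (hgmono (by linarith only [ha0, hu]) hc))]
      have h2 : |u - v| = v - u := by
        rw [abs_sub_comm, abs_of_nonneg (sub_nonneg.2 hc)]
      rw [h1, h2]; exact lipg0 u v hu hc
    · have h1 : |g u - g v| = g u - g v :=
        abs_of_nonneg (sub_nonneg.2 (hgmono (by linarith only [ha0, hv]) hc))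
      have h2 : |u - v| = u - v := abs_of_nonneg (sub_nonneg.2 hc)
      rw [h1, h2]; exact lipg0 v u hv hc
  -- eventual slope bounds
  have hfx' : ∀ n, f (x n) = a n + lam n * (x n - a n) := fun n => by
    rw [hf1 n (x n) ⟨(hx n).1.le, le_refl _⟩, hfa n]
  have hgx' : ∀ n, g (x n) = a n + lam' n * (x n - a n) := fun n => by
    rw [hg1 n (x n) ⟨(hx n).1.le, le_refl _⟩, hga n]
  have hev1 := evSlope f a x lam eps K hapos (fun n => (hx n).1) hfx' heps hK
      (fun n => (hsep n).1) (fun n => (hratio n).1) hat hf.1 hfinf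
  have hev2 := evSlope g a x lam' eps K hapos (fun n => (hx n).1) hgx' heps hK
      (fun n => (hsep n).2.1) (fun n => (hratio n).1) hat hg.1 hginf
  -- constants
  have hmin0 : 0 < min (eps / (L*L)) (1/L) :=
    lt_min (div_pos heps (mul_pos hL0 hL0)) (one_div_pos.2 hL0)
  obtain ⟨c0, hc0def⟩ : ∃ c : ℝ, c = eps * min (eps / (L*L)) (1/L) * (K-1) := ⟨_, rfl⟩
  have hc0 : 0 < c0 := by
    rw [hc0def]; exact mul_pos (mul_pos heps hmin0) (by linarith only [hK])
  obtain ⟨η, hηdef⟩ : ∃ e : ℝ,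
      e = min (c0 / ((8+4*L) * (K'*K'))) (1/(2*L*(K'*K'))) := ⟨_, rfl⟩
  have hη : 0 < η := by
    rw [hηdef]
    exact lt_min (div_pos hc0 (mul_pos (by linarith only [hL0]) (mul_pos hK'0 hK'0)))
      (one_div_pos.2 (mul_pos (mul_pos (by linarith only []) hL0) (mul_pos hK'0 hK'0)))
  have hη1 : η * (K'*K') ≤ 1/(2*L) := by
    have hmle : η ≤ 1/(2*L*(K'*K')) := by rw [hηdef]; exact min_le_right _ _
    have e : (1/(2*L*(K'*K'))) * (K'*K') = 1/(2*L) := by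
      field_simp
    calc η * (K'*K') ≤ (1/(2*L*(K'*K'))) * (K'*K') :=
          mul_le_mul_of_nonneg_right hmle (le_of_lt (mul_pos hK'0 hK'0))
      _ = 1/(2*L) := e
  have hη2 : (4+2*L) * (η * (K'*K')) ≤ c0/2 := by
    have hmle2 : η ≤ c0/((8+4*L)*(K'*K')) := by rw [hηdef]; exact min_le_left _ _
    have hpos2 : (0:ℝ) < (4+2*L)*(K'*K') := mul_pos (by linarith only [hL0]) (mul_pos hK'0 hK'0)
    have h3 := mul_le_mul_of_nonneg_left hmle2 hpos2.le
    have hne1 : (8+4*L : ℝ) ≠ 0 := ne_of_gt (by linarith only [hL0])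
    have hne2 : K' ≠ 0 := ne_of_gt hK'0
    have e : (4+2*L)*(K'*K') * (c0/((8+4*L)*(K'*K'))) = c0/2 := by
      field_simp
      ring
    calc (4+2*L) * (η * (K'*K')) = (4+2*L)*(K'*K') * η := by ring
      _ ≤ (4+2*L)*(K'*K') * (c0/((8+4*L)*(K'*K'))) := h3
      _ = c0/2 := e
  obtain ⟨M, hM1, hMp⟩ := nearId h hht η hη
  obtain ⟨M', hM'1, hM'p⟩ := nearId h' hht' η hη
  -- choose n
  obtain ⟨R, hRdef⟩ : ∃ R : ℝ,
      R = max (2*M) (max (2*M') (max (2*a 0) (2*C/c0 + 1))) := ⟨_, rfl⟩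
  obtain ⟨n, ⟨hsl1, hsl2⟩, hRa⟩ :=
    ((hev1.and hev2).and (hat.eventually_ge_atTop R)).exists
  have hMa : 2*M ≤ a n := le_trans (by rw [hRdef]; exact le_max_left _ _) hRa
  have hM'a : 2*M' ≤ a n :=
    le_trans (by rw [hRdef]; exact le_trans (le_max_left _ _) (le_max_right _ _)) hRa
  have ha0a : 2*a 0 ≤ a n := by
    refine le_trans ?_ hRa
    rw [hRdef]
    exact le_trans (le_trans (le_max_left _ _) (le_max_right _ _)) (le_max_right _ _)
  have hCa : 2*C/c0 + 1 ≤ a n := by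
    refine le_trans ?_ hRa
    rw [hRdef]
    exact le_trans (le_trans (le_max_right _ _) (le_max_right _ _)) (le_max_right _ _)
  have hanpos : 0 < a n := hapos n
  have hCc : C < c0/2 * a n := by
    have h1 : 2*C/c0 < a n := by linarith only [hCa]
    rw [div_lt_iff₀ hc0] at h1
    linarith only [h1]
  -- key point from core
  have hfA : ∀ t ∈ Set.Icc (a n) (x n), f t = a n + lam n * (t - a n) := fun t ht => by
    rw [hf1 n t ht, hfa n]
  have hgA : ∀ t ∈ Set.Icc (a n) (x n), g t = a n + lam' n * (t - a n) := fun t ht => by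
    rw [hg1 n t ht, hga n]
  have hsep3 := (hsep n).2.2
  have hmun : 0 < mu n := lt_of_lt_of_le (one_div_pos.2 hL0) (hbound n).2.2.1
  have hmu'n : 0 < mu' n := lt_of_lt_of_le (one_div_pos.2 hL0) (hbound n).2.2.2.2.2.2.1
  have key : ∃ t, a n ≤ t ∧ t ≤ a (n+1) ∧ a n ≤ f t ∧ f t ≤ a (n+1) ∧
      a n ≤ g t ∧ g t ≤ a (n+1) ∧ a n ≤ f (g t) ∧ f (g t) ≤ a (n+1) ∧
      a n ≤ g (f t) ∧ g (f t) ≤ a (n+1) ∧ c0 * a n ≤ |f (g t) - g (f t)| := by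
    rcases lt_or_ge (lam' n) (lam n) with hcase | hcase
    · have hll : eps < lam n - lam' n := by
        have h1 := hsep3; rw [abs_of_pos (by linarith only [hcase])] at h1; exact h1
      obtain ⟨t, p1,p2,p3,p4,p5,p6,p7,p8,p9,p10,p11⟩ :=
        core f g (a n) (x n) (a (n+1)) (lam n) (mu n) (lam' n) (mu' n) L eps K
          (hapos n) (hx n).1 (hx n).2 (hKA n) (hKX n) hfA hgA (hf2 n) (hg2 n)
          (hfa (n+1)) (hga (n+1)) hL heps hK (hbound n).2.1 (hbound n).2.2.2.2.2.1
          hsl2 hll hmun hmu'n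
      exact ⟨t, p1,p2,p3,p4,p5,p6,p7,p8,p9,p10, by
        rw [hc0def]; exact le_trans p11 (le_abs_self _)⟩
    · have hlt : lam n < lam' n := by
        rcases eq_or_lt_of_le hcase with he | hlt
        · exfalso
          have h1 := hsep3
          rw [he, sub_self, abs_zero] at h1
          linarith only [h1, heps]
        · exact hlt
      have hll : eps < lam' n - lam n := by
        have h1 := hsep3; rw [abs_of_neg (by linarith only [hlt])] at h1; linarith only [h1]
      obtain ⟨t, p1,p2,p3,p4,p5,p6,p7,p8,p9,p10,p11⟩ :=
        core g f (a n) (x n) (a (n+1)) (lam' n) (mu' n) (lam n) (mu n) L eps K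
          (hapos n) (hx n).1 (hx n).2 (hKA n) (hKX n) hgA hfA (hg2 n) (hf2 n)
          (hga (n+1)) (hfa (n+1)) hL heps hK (hbound n).2.2.2.2.2.1 (hbound n).2.1
          hsl1 hll hmu'n hmun
      refine ⟨t, p1,p2,p5,p6,p3,p4,p9,p10,p7,p8, ?_⟩
      rw [hc0def]
      refine le_trans p11 (le_trans (le_abs_self _) (le_of_eq ?_))
      exact abs_sub_comm _ _
  obtain ⟨t, q1,q2,q3,q4,q5,q6,q7,q8,q9,q10,q11⟩ := key
  -- step C: the commutator bound forces |f∘g - g∘f| small at t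
  have hAK2 : a (n+1) ≤ K'*K' * a n := hBK2 n
  have hK2 : (1:ℝ) ≤ K'*K' := by
    have h1 := mul_le_mul hK'.le hK'.le zero_le_one hK'0.le
    linarith only [h1]
  have hK2an : a n ≤ K'*K'*a n := by
    have h1 := mul_le_mul_of_nonneg_right hK2 hanpos.le
    linarith only [h1]
  have hM_an : M ≤ a n := by linarith only [hMa, hM1]
  have hM'_an : M' ≤ a n := by linarith only [hM'a, hM'1]
  have hM_half : M ≤ a n / 2 := by linarith only [hMa, hM1]
  have hM'_half : M' ≤ a n / 2 := by linarith only [hM'a, hM'1]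
  have ha0n : a 0 ≤ a n := ham.monotone (Nat.zero_le n)
  have ha0half : a 0 ≤ a n / 2 := by linarith only [ha0a]
  obtain ⟨E, hEdef⟩ : ∃ E : ℝ, E = η * (K'*K'*a n) := ⟨_, rfl⟩
  have hE0 : 0 ≤ E := by
    rw [hEdef]; exact mul_nonneg hη.le (le_of_lt (mul_pos (mul_pos hK'0 hK'0) hanpos))
  have hEan : E ≤ a n / 2 := by
    have h1 := mul_le_mul_of_nonneg_right hη1 hanpos.le
    have hle : (1:ℝ)/(2*L) ≤ 1/2 := by
      rw [div_le_div_iff₀ (by linarith only [hL0]) (by norm_num)]; linarith only [hL]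
    have h2 := mul_le_mul_of_nonneg_right hle hanpos.le
    rw [hEdef]; linarith only [h1, h2]
  have hLE : L * E ≤ a n / 2 := by
    have h1 := mul_le_mul_of_nonneg_left hη1 hL0.le
    have e : L*(1/(2*L)) = 1/2 := by
      rw [mul_one_div]
      rw [div_eq_div_iff (by linarith only [hL0]) (by norm_num)]
      ring
    have h2 := mul_le_mul_of_nonneg_right h1 hanpos.le
    rw [e] at h2
    rw [hEdef]; linarith only [h2]
  -- branch 1 : h (f (h' (g t)))
  have hgt_ub : g t ≤ K'*K'*a n := le_trans q6 hAK2
  have es1 : |h' (g t) - g t| ≤ E := by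
    have h1 := hM'p (g t) (le_trans hM'_an q5)
    have h2 := mul_le_mul_of_nonneg_left hgt_ub hη.le
    rw [hEdef]; linarith only [h1, h2]
  have habs1 := abs_le.1 es1
  have hh'gt_lb : a n / 2 ≤ h' (g t) := by linarith only [habs1.1, hEan, q5]
  have hh'gt_a0 : a 0 ≤ h' (g t) := le_trans ha0half hh'gt_lb
  have es2 : |f (h' (g t)) - f (g t)| ≤ L * E := by
    have h1 := lipf (h' (g t)) (g t) hh'gt_a0 (le_trans ha0n q5)
    have h3 := mul_le_mul_of_nonneg_left es1 hL0.le
    linarith only [h1, h3]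
  have habs2 := abs_le.1 es2
  have hs2_lb : a n / 2 ≤ f (h' (g t)) := by linarith only [habs2.1, hLE, q7]
  have hs2_ub : f (h' (g t)) ≤ 2*(K'*K')*a n := by
    have h1 := le_trans q8 hAK2
    linarith only [habs2.2, hLE, hK2an, h1, hanpos]
  have es3 : |h (f (h' (g t))) - f (h' (g t))| ≤ 2*E := by
    have h1 := hMp _ (le_trans hM_half hs2_lb)
    have h2 := mul_le_mul_of_nonneg_left hs2_ub hη.le
    rw [hEdef]; linarith only [h1, h2]
  have final1 : |h (f (h' (g t))) - f (g t)| ≤ (2+L)*E := by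
    have h1 := abs_sub_le (h (f (h' (g t)))) (f (h' (g t))) (f (g t))
    linarith only [h1, es2, es3]
  -- branch 2 : h' (g (h (f t)))
  have hft_ub : f t ≤ K'*K'*a n := le_trans q4 hAK2
  have et1 : |h (f t) - f t| ≤ E := by
    have h1 := hMp (f t) (le_trans hM_an q3)
    have h2 := mul_le_mul_of_nonneg_left hft_ub hη.le
    rw [hEdef]; linarith only [h1, h2]
  have habt1 := abs_le.1 et1
  have hhft_lb : a n / 2 ≤ h (f t) := by linarith only [habt1.1, hEan, q3]
  have hhft_a0 : a 0 ≤ h (f t) := le_trans ha0half hhft_lb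
  have et2 : |g (h (f t)) - g (f t)| ≤ L * E := by
    have h1 := lipg (h (f t)) (f t) hhft_a0 (le_trans ha0n q3)
    have h3 := mul_le_mul_of_nonneg_left et1 hL0.le
    linarith only [h1, h3]
  have habt2 := abs_le.1 et2
  have hs2'_lb : a n / 2 ≤ g (h (f t)) := by linarith only [habt2.1, hLE, q9]
  have hs2'_ub : g (h (f t)) ≤ 2*(K'*K')*a n := by
    have h1 := le_trans q10 hAK2
    linarith only [habt2.2, hLE, hK2an, h1, hanpos]
  have et3 : |h' (g (h (f t))) - g (h (f t))| ≤ 2*E := by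
    have h1 := hM'p _ (le_trans hM'_half hs2'_lb)
    have h2 := mul_le_mul_of_nonneg_left hs2'_ub hη.le
    rw [hEdef]; linarith only [h1, h2]
  have final2 : |h' (g (h (f t))) - g (f t)| ≤ (2+L)*E := by
    have h1 := abs_sub_le (h' (g (h (f t)))) (g (h (f t))) (g (f t))
    linarith only [h1, et2, et3]
  -- assemble the contradiction
  have hCt := hC t (by linarith only [q1, hanpos] : (0:ℝ) ≤ t)
  have tri : |f (g t) - g (f t)| ≤ (2+L)*E + C + (2+L)*E := by
    have t1 := abs_sub_le (f (g t)) (h' (g (h (f t)))) (g (f t))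
    have t2 := abs_sub_le (f (g t)) (h (f (h' (g t)))) (h' (g (h (f t))))
    have c1 : |f (g t) - h (f (h' (g t)))| ≤ (2+L)*E := by
      rw [abs_sub_comm]; exact final1
    linarith only [t1, t2, c1, final2, hCt]
  have hEc : (4+2*L)*E ≤ c0/2 * a n := by
    have h1 := mul_le_mul_of_nonneg_right hη2 hanpos.le
    rw [hEdef]; linarith only [h1]
  linarith only [q11, tri, hEc, hCc]
end
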